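/- arXiv:0706.3463 — 6 statements merged into one kernel-verified Lean document; each statement's English description precedes it below -/
import Mathlib

section
/- Let τ be a real number such that lim_{n→∞} e^{iτ2^n} = 1. Then τ belongs to the set {2πk/2^n : k ∈ ℤ, n ∈ ℕ}. -/
open Filter Topology

/-- If `e^{iτ2^n} → 1` as `t → ∞`, then `τ = 2πk/2^n` for some `k ∈ ℤ`, `n ∈ ℕ`. -/
theorem dyadic_of_exp_two_pow_tendsto_one (τ : ℝ)
    (h : Tendsto (fun n : ℕ => Complex.exp (Complex.I * τ * 2 ^ n)) atTop (𝓝 1)) :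
    ∃ (k : ℤ) (n : ℕ), τ = 2 * Real.pi * k / 2 ^ n := by
  have hπ := Real.pi_pos
  set c : ℝ := 2 * Real.pi with hc
  have hcpos : 0 < c := by positivity
  set θ : ℕ → ℝ := fun n => τ * 2 ^ n - c * round (τ * 2 ^ n / c) with hθ
  -- exp(I τ 2^n) = exp(I θ n)
  have hexp : ∀ n : ℕ, Complex.exp (Complex.I * τ * 2 ^ n) = Complex.exp (Complex.I * θ n) := by
    intro n
    have : (Complex.I * τ * 2 ^ n : ℂ) =
        Complex.I * θ n + (round (τ * 2 ^ n / c) : ℤ) * (2 * Real.pi * Complex.I) := by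
      push_cast [hθ, hc]
      ring
    rw [this, Complex.exp_add, Complex.exp_int_mul_two_pi_mul_I, mul_one]
  -- |θ n| ≤ π
  have hbound : ∀ n : ℕ, |θ n| ≤ Real.pi := by
    intro n
    have h1 : |τ * 2 ^ n / c - round (τ * 2 ^ n / c)| ≤ 1 / 2 := abs_sub_round _
    have : θ n = c * (τ * 2 ^ n / c - round (τ * 2 ^ n / c)) := by
      field_simp [hθ]
      rfl
    rw [this, abs_mul, abs_of_pos hcpos]
    calc c * |τ * 2 ^ n / c - round (τ * 2 ^ n / c)| ≤ c * (1 / 2) := by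
          exact mul_le_mul_of_nonneg_left h1 hcpos.le
      _ = Real.pi := by rw [hc]; ring
  -- eventually ‖exp(I θ n) - 1‖ < 1/2
  have h' : ∀ᶠ n in atTop, ‖Complex.exp (Complex.I * θ n) - 1‖ < 1 / 2 := by
    have := (h.sub_const 1).norm
    simp only [sub_self, norm_zero] at this
    have h2 := this.eventually (eventually_lt_nhds (by norm_num : (0:ℝ) < 1/2))
    filter_upwards [h2] with n hn
    rw [← hexp n]; exact hn
  obtain ⟨N, hN⟩ := eventually_atTop.mp h'
  -- for n ≥ N, |θ n| < π/4
  have hsmall : ∀ n, N ≤ n → |θ n| < Real.pi / 4 := by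
    intro n hn
    have hnorm := hN n hn
    have hexpand : Complex.exp (Complex.I * θ n) - 1 =
        Complex.ofReal (Real.cos (θ n) - 1) + Complex.ofReal (Real.sin (θ n)) * Complex.I := by
      rw [mul_comm, Complex.exp_mul_I, ← Complex.ofReal_cos, ← Complex.ofReal_sin]
      push_cast
      ring
    have hsin : |Real.sin (θ n)| < 1 / 2 := by
      have : |Real.sin (θ n)| ≤ ‖Complex.exp (Complex.I * θ n) - 1‖ := by
        rw [hexpand]
        have := Complex.abs_im_le_norm (Complex.ofReal (Real.cos (θ n) - 1) +
          Complex.ofReal (Real.sin (θ n)) * Complex.I)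
        simpa [Complex.sin_ofReal_re, Complex.cos_ofReal_re] using this
      linarith
    have hcos : 1 - Real.cos (θ n) < 1 / 2 := by
      have : |Real.cos (θ n) - 1| ≤ ‖Complex.exp (Complex.I * θ n) - 1‖ := by
        rw [hexpand]
        have := Complex.abs_re_le_norm (Complex.ofReal (Real.cos (θ n) - 1) +
          Complex.ofReal (Real.sin (θ n)) * Complex.I)
        simpa [Complex.sin_ofReal_re, Complex.cos_ofReal_re] using this
      have := neg_abs_le (Real.cos (θ n) - 1)
      linarith
    -- cos θ > 0, |θ| ≤ π ⇒ |θ| < π/2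
    have hlt : |θ n| < Real.pi / 2 := by
      by_contra hge
      push_neg at hge
      have hcosnp : Real.cos (θ n) ≤ 0 := by
        have : Real.cos |θ n| ≤ 0 :=
          Real.cos_nonpos_of_pi_div_two_le_of_le hge (by linarith [hbound n, abs_nonneg (θ n)])
        rcases abs_choice (θ n) with h1 | h1
        · rwa [h1] at this
        · rw [h1, Real.cos_neg] at this; exact this
      linarith
    -- 2/π * |θ| ≤ |sin θ| < 1/2
    have hsin2 : 2 / Real.pi * |θ n| ≤ |Real.sin (θ n)| := by
      rcases le_or_gt 0 (θ n) with h1 | h1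
      · have hle : θ n ≤ Real.pi / 2 := (le_abs_self _).trans hlt.le
        have hs : 0 ≤ Real.sin (θ n) :=
          Real.sin_nonneg_of_nonneg_of_le_pi h1 (hle.trans (by linarith [Real.pi_pos]))
        rw [abs_of_nonneg h1, abs_of_nonneg hs]
        exact Real.mul_le_sin h1 hle
      · have hle : -θ n ≤ Real.pi / 2 := (neg_le_abs _).trans hlt.le
        have := Real.mul_le_sin (by linarith : (0:ℝ) ≤ -θ n) hle
        rw [Real.sin_neg] at this
        rw [abs_of_neg h1]
        calc 2 / Real.pi * -θ n ≤ -Real.sin (θ n) := this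
          _ ≤ |Real.sin (θ n)| := neg_le_abs _
    have hkey : 2 / Real.pi * |θ n| < 1 / 2 := lt_of_le_of_lt hsin2 hsin
    rw [div_mul_eq_mul_div, div_lt_div_iff₀ hπ (by norm_num : (0:ℝ) < 2)] at hkey
    linarith
  -- θ (n+1) = 2 θ n for n ≥ N
  have hdouble : ∀ n, N ≤ n → θ (n + 1) = 2 * θ n := by
    intro n hn
    set m : ℤ := 2 * round (τ * 2 ^ n / c) - round (τ * 2 ^ (n + 1) / c) with hm
    have hdiff : θ (n + 1) - 2 * θ n = c * (m : ℝ) := by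
      simp only [hθ, hm]
      push_cast
      ring
    have h1 := hsmall n hn
    have h2 := hsmall (n + 1) (by omega)
    have habs : |θ (n + 1) - 2 * θ n| < c := by
      have t1 : |θ (n + 1) - 2 * θ n| ≤ |θ (n + 1)| + |2 * θ n| := abs_sub _ _
      rw [abs_mul, abs_two] at t1
      rw [hc]
      linarith
    rw [hdiff] at habs
    have hm0 : m = 0 := by
      by_contra hne
      have : (1 : ℝ) ≤ |(m : ℝ)| := by
        rw [← Int.cast_abs]
        exact_mod_cast Int.one_le_abs (by omega)
      rw [abs_mul, abs_of_pos hcpos] at habs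
      nlinarith
    rw [hm0] at hdiff
    push_cast at hdiff
    linarith
  -- θ (N + k) = 2^k * θ N
  have hiter : ∀ k : ℕ, θ (N + k) = 2 ^ k * θ N := by
    intro k
    induction k with
    | zero => simp
    | succ k ih =>
      have := hdouble (N + k) (by omega)
      rw [show N + (k + 1) = N + k + 1 from rfl, this, ih]
      ring
  -- θ N = 0
  have hzero : θ N = 0 := by
    by_contra hne
    have habs : 0 < |θ N| := abs_pos.mpr hne
    obtain ⟨k, hk⟩ := pow_unbounded_of_one_lt (Real.pi / 4 / |θ N|) (by norm_num : (1:ℝ) < 2)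
    have h1 := hsmall (N + k) (by omega)
    rw [hiter k] at h1
    rw [abs_mul, abs_pow] at h1
    simp only [abs_two] at h1
    have : Real.pi / 4 / |θ N| < 2 ^ k := hk
    rw [div_lt_iff₀ habs] at this
    linarith
  -- conclude
  refine ⟨round (τ * 2 ^ N / c), N, ?_⟩
  have : τ * 2 ^ N = c * round (τ * 2 ^ N / c) := by
    have := hzero
    simp only [hθ] at this
    linarith
  field_simp
  linarith
end

section
/- Let X and Y be Banach spaces, and suppose there exist Banach spaces V and W such that X is isomorphic to Y ⊕ W, Y is isomorphic to X ⊕ V, X ⊕ X is isomorphic to X, and Y ⊕ Y is isomorphic to Y (all isomorphisms being linear homeomorphisms). Then X is isomorphic to Y. -/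
/-- Pełczyński's decomposition trick for Banach spaces. -/
theorem pelczynski_trick (X Y V W : Type*)
    [NormedAddCommGroup X] [NormedSpace ℝ X] [CompleteSpace X]
    [NormedAddCommGroup Y] [NormedSpace ℝ Y] [CompleteSpace Y]
    [NormedAddCommGroup V] [NormedSpace ℝ V] [CompleteSpace V]
    [NormedAddCommGroup W] [NormedSpace ℝ W] [CompleteSpace W]
    (h1 : Nonempty (X ≃L[ℝ] Y × W)) (h2 : Nonempty (Y ≃L[ℝ] X × V))
    (h3 : Nonempty ((X × X) ≃L[ℝ] X)) (h4 : Nonempty ((Y × Y) ≃L[ℝ] Y)) :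
    Nonempty (X ≃L[ℝ] Y) := by
  obtain ⟨e1⟩ := h1
  obtain ⟨e2⟩ := h2
  obtain ⟨e3⟩ := h3
  obtain ⟨e4⟩ := h4
  -- X ≃ Y × X
  have eXY : X ≃L[ℝ] Y × X :=
    e1.trans <| (e4.symm.prodCongr (ContinuousLinearEquiv.refl ℝ W)).trans <|
      ((LinearIsometryEquiv.prodAssoc ℝ Y Y W).toContinuousLinearEquiv).trans <|
        (ContinuousLinearEquiv.refl ℝ Y).prodCongr e1.symm
  -- Y ≃ X × Y
  have eYX : Y ≃L[ℝ] X × Y :=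
    e2.trans <| (e3.symm.prodCongr (ContinuousLinearEquiv.refl ℝ V)).trans <|
      ((LinearIsometryEquiv.prodAssoc ℝ X X V).toContinuousLinearEquiv).trans <|
        (ContinuousLinearEquiv.refl ℝ X).prodCongr e2.symm
  exact ⟨eXY.trans <| (ContinuousLinearEquiv.prodComm ℝ Y X).trans eYX.symm⟩
end

section
/- Let 0 < a ≤ 1/2, let ν_a be the Bernoulli product measure ⊗(aδ_0+(1-a)δ_1) on Ω = {0,1}^ℕ, and let g be the dyadic odometer on Ω. For n ≥ 1, let K_n ⊆ Ω be the set of sequences of the form (1,1,...,1,0,x_{n+1},x_{n+2},...) with n−1 leading ones. Then for every Borel set E ⊆ K_n, ν_a(g(E)) = ((1-a)/a) · (a/(1-a))^{n-1} · ν_a(E). -/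
open MeasureTheory Filter Topology ENNReal

/-- The dyadic odometer ("addition of `(1,0,0,...)` with carry to the right") on `{0,1}^ℕ`:
it flips the `n`-th bit exactly when all earlier bits equal `1`. -/
def odometer (x : ℕ → Bool) : ℕ → Bool :=
  fun n => if ∀ k < n, x k = true then !(x n) else x n

/-- The inverse of the dyadic odometer ("subtraction of `1` with borrow"). -/
def odometerInv (x : ℕ → Bool) : ℕ → Bool :=
  fun n => if ∀ k < n, x k = false then !(x n) else x n

/-- `ν` is the Bernoulli product measure `⊗_{n} (a δ_0 + (1-a) δ_1)` on `{0,1}^ℕ`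
(identifying `0` with `false` and `1` with `true`): it is a probability measure giving each
cylinder set determined by the first `n` coordinates its product measure. -/
def IsBernoulliProd (a : ℝ) (ν : Measure (ℕ → Bool)) : Prop :=
  IsProbabilityMeasure ν ∧
    ∀ (n : ℕ) (s : Fin n → Bool),
      ν {x | ∀ i : Fin n, x i = s i} =
        ∏ i : Fin n, ENNReal.ofReal (if s i then 1 - a else a)

/-- The total variation distance `‖μ - ν‖` of two (finite) measures. -/
noncomputable def tvDist {Ω : Type*} [MeasurableSpace Ω] (μ ν : Measure Ω) : ℝ≥0∞ :=
  (μ - ν) Set.univ + (ν - μ) Set.univ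


/-- cylinder sets -/
def cyl {m : ℕ} (s : Fin m → Bool) : Set (ℕ → Bool) := {x | ∀ i : Fin m, x i = s i}

lemma measurableSet_cyl {m : ℕ} (s : Fin m → Bool) : MeasurableSet (cyl s) := by
  have h : cyl s = ⋂ i : Fin m, {x : ℕ → Bool | x i = s i} := by
    ext x; simp [cyl]
  rw [h]
  refine MeasurableSet.iInter fun i => ?_
  have h2 : {x : ℕ → Bool | x i = s i} = (fun x : ℕ → Bool => x (i : ℕ)) ⁻¹' {s i} := rfl
  rw [h2]
  exact (measurable_pi_apply (i : ℕ)) (measurableSet_singleton (s i))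

def cylSet (n : ℕ) : Set (Set (ℕ → Bool)) :=
  {C | ∃ (q : ℕ) (s : Fin (n + q) → Bool), C = cyl s}

lemma eval_preimage_mem (n i : ℕ) (b : Bool) :
    MeasurableSet[.generateFrom (cylSet n)] {x : ℕ → Bool | x i = b} := by
  have h : {x : ℕ → Bool | x i = b} =
      ⋃ (u : {u : Fin (n + (i + 1)) → Bool // u ⟨i, by omega⟩ = b}), cyl u.1 := by
    ext x
    simp only [Set.mem_iUnion, Set.mem_setOf_eq]
    constructor
    · intro hx
      exact ⟨⟨fun j => x j, hx⟩, fun j => rfl⟩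
    · rintro ⟨⟨u, hu⟩, hx⟩
      have := hx ⟨i, by omega⟩
      simpa [hu] using this
  rw [h]
  exact MeasurableSet.iUnion fun u => .basic _ ⟨i + 1, u.1, rfl⟩

lemma generateFrom_cylSet (n : ℕ) :
    (inferInstance : MeasurableSpace (ℕ → Bool)) = .generateFrom (cylSet n) := by
  refine le_antisymm (iSup_le fun i => ?_) (MeasurableSpace.generateFrom_le ?_)
  · rintro _ ⟨B, -, rfl⟩
    have h : (fun x : ℕ → Bool => x i) ⁻¹' B = ⋃ b ∈ B, {x : ℕ → Bool | x i = b} := by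
      ext x; simp
    rw [h]
    exact MeasurableSet.biUnion B.to_countable fun b _ => eval_preimage_mem n i b
  · rintro _ ⟨q, s, rfl⟩
    exact measurableSet_cyl s

lemma cyl_inter_of_le {m₁ m₂ : ℕ} (h : m₁ ≤ m₂) (s₁ : Fin m₁ → Bool) (s₂ : Fin m₂ → Bool)
    (hne : (cyl s₁ ∩ cyl s₂).Nonempty) : cyl s₁ ∩ cyl s₂ = cyl s₂ := by
  obtain ⟨x₀, h₁, h₂⟩ := hne
  refine Set.inter_eq_self_of_subset_right (fun x hx i => ?_)
  have e : s₁ i = s₂ ⟨i, lt_of_lt_of_le i.isLt h⟩ := (h₁ i).symm.trans (h₂ ⟨i, _⟩)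
  rw [e]
  exact hx ⟨i, _⟩

lemma isPiSystem_cylSet (n : ℕ) : IsPiSystem (cylSet n) := by
  rintro _ ⟨q₁, s₁, rfl⟩ _ ⟨q₂, s₂, rfl⟩ hne
  rcases le_total (n + q₁) (n + q₂) with h | h
  · rw [cyl_inter_of_le h s₁ s₂ hne]; exact ⟨q₂, s₂, rfl⟩
  · rw [Set.inter_comm] at hne ⊢
    rw [cyl_inter_of_le h s₂ s₁ hne]; exact ⟨q₁, s₁, rfl⟩

def flipF (n : ℕ) (x : ℕ → Bool) : ℕ → Bool := fun k => if k < n then !(x k) else x k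

lemma measurable_flipF (n : ℕ) : Measurable (flipF n) := by
  refine measurable_pi_iff.mpr fun k => ?_
  unfold flipF
  by_cases h : k < n
  · simp only [if_pos h]
    exact Measurable.comp (f := fun x : ℕ → Bool => x k) (g := Bool.not) .of_discrete (measurable_pi_apply k)
  · simp only [if_neg h]
    exact measurable_pi_apply k

lemma flipF_invol (n : ℕ) (x : ℕ → Bool) : flipF n (flipF n x) = x := by
  funext k; unfold flipF; by_cases h : k < n <;> simp [h]

lemma flipF_preimage_cyl (n m : ℕ) (s : Fin m → Bool) :
    flipF n ⁻¹' cyl s = cyl (fun i : Fin m => if (i : ℕ) < n then !(s i) else s i) := by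
  ext x
  show (∀ i : Fin m, flipF n x i = s i) ↔ ∀ i : Fin m, x i = if (i : ℕ) < n then !(s i) else s i
  refine forall_congr' fun i => ?_
  unfold flipF
  by_cases hi : (i : ℕ) < n
  · simp only [if_pos hi]
    constructor
    · intro h; rw [← h, Bool.not_not]
    · intro h; rw [h, Bool.not_not]
  · simp only [if_neg hi]

lemma not_decide_lt (p k : ℕ) (h : k < p + 1) : (!decide (k < p)) = decide (k = p) := by
  by_cases hk : k < p
  · have h2 : k ≠ p := by omega
    simp [hk, h2]
  · have h2 : k = p := by omega
    simp [hk, h2]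

lemma prod_pattern_lt (p : ℕ) (w : Bool → ℝ≥0∞) :
    (∏ k : Fin (p + 1), w (decide ((k : ℕ) < p))) = w true ^ p * w false := by
  rw [Fin.prod_univ_castSucc]
  have h1 : ∀ k : Fin p, (decide ((k.castSucc : ℕ) < p)) = true := fun k => by
    simp [k.isLt]
  have h2 : (decide ((Fin.last p : ℕ) < p)) = false := by simp
  rw [h2, Finset.prod_congr rfl (fun k _ => by rw [h1 k]), Finset.prod_const,
    Finset.card_univ, Fintype.card_fin]

lemma prod_pattern_eq (p : ℕ) (w : Bool → ℝ≥0∞) :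
    (∏ k : Fin (p + 1), w (decide ((k : ℕ) = p))) = w false ^ p * w true := by
  rw [Fin.prod_univ_castSucc]
  have h1 : ∀ k : Fin p, (decide ((k.castSucc : ℕ) = p)) = false := fun k => by
    have := k.isLt; simp; omega
  have h2 : (decide ((Fin.last p : ℕ) = p)) = true := by simp
  rw [h2, Finset.prod_congr rfl (fun k _ => by rw [h1 k]), Finset.prod_const,
    Finset.card_univ, Fintype.card_fin]

lemma scalar_key (a : ℝ) (ha0 : 0 < a) (ha : a ≤ 1 / 2) (p : ℕ) :
    ENNReal.ofReal ((1 - a) / a) * ENNReal.ofReal (a / (1 - a)) ^ p *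
      (ENNReal.ofReal (1 - a) ^ p * ENNReal.ofReal a) =
    ENNReal.ofReal a ^ p * ENNReal.ofReal (1 - a) := by
  have ha1 : (0 : ℝ) < 1 - a := by linarith
  have e1 : ENNReal.ofReal ((1 - a) / a) * ENNReal.ofReal a = ENNReal.ofReal (1 - a) := by
    rw [← ENNReal.ofReal_mul (by positivity), div_mul_cancel₀ _ (ne_of_gt ha0)]
  have e2 : ENNReal.ofReal (a / (1 - a)) * ENNReal.ofReal (1 - a) = ENNReal.ofReal a := by
    rw [← ENNReal.ofReal_mul (by positivity), div_mul_cancel₀ _ (ne_of_gt ha1)]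
  calc ENNReal.ofReal ((1 - a) / a) * ENNReal.ofReal (a / (1 - a)) ^ p *
        (ENNReal.ofReal (1 - a) ^ p * ENNReal.ofReal a)
      = (ENNReal.ofReal ((1 - a) / a) * ENNReal.ofReal a) *
        (ENNReal.ofReal (a / (1 - a)) * ENNReal.ofReal (1 - a)) ^ p := by ring
    _ = ENNReal.ofReal a ^ p * ENNReal.ofReal (1 - a) := by rw [e1, e2]; ring

lemma key (a : ℝ) (ha0 : 0 < a) (ha : a ≤ 1 / 2) (ν : Measure (ℕ → Bool))
    (hν : IsBernoulliProd a ν) (p : ℕ) :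
    Measure.map (flipF (p + 1))
        (ν.restrict (cyl (fun k : Fin (p + 1) => decide ((k : ℕ) = p)))) =
      (ENNReal.ofReal ((1 - a) / a) * ENNReal.ofReal (a / (1 - a)) ^ p) •
        ν.restrict (cyl (fun k : Fin (p + 1) => decide ((k : ℕ) < p))) := by
  obtain ⟨hprob, hcyl⟩ := hν
  set w : Bool → ℝ≥0∞ := fun b => ENNReal.ofReal (if b then 1 - a else a) with hw
  set t : Fin (p + 1) → Bool := fun k => decide ((k : ℕ) < p) with ht
  set t' : Fin (p + 1) → Bool := fun k => decide ((k : ℕ) = p) with ht'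
  set c : ℝ≥0∞ := ENNReal.ofReal ((1 - a) / a) * ENNReal.ofReal (a / (1 - a)) ^ p with hc
  have hνcyl : ∀ {m : ℕ} (s : Fin m → Bool), ν (cyl s) = ∏ i, w (s i) := fun s => hcyl _ s
  have hs : c * (w true ^ p * w false) = w false ^ p * w true := by
    have := scalar_key a ha0 ha p
    rw [← hc] at this
    simpa [hw] using this
  haveI : IsFiniteMeasure (ν.restrict (cyl t')) := inferInstance
  haveI : IsFiniteMeasure (Measure.map (flipF (p + 1)) (ν.restrict (cyl t'))) :=
    Measure.isFiniteMeasure_map _ _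
  refine ext_of_generate_finite (cylSet (p + 1)) (generateFrom_cylSet (p + 1))
    (isPiSystem_cylSet (p + 1)) ?_ ?_
  · rintro _ ⟨q, s, rfl⟩
    have hms := measurableSet_cyl s
    set s' : Fin (p + 1 + q) → Bool :=
      fun i => if (i : ℕ) < p + 1 then !(s i) else s i with hs'
    have hpre : flipF (p + 1) ⁻¹' cyl s = cyl s' := flipF_preimage_cyl (p + 1) _ s
    rw [Measure.map_apply (measurable_flipF _) hms, hpre, Measure.smul_apply, smul_eq_mul,
      Measure.restrict_apply (measurableSet_cyl s'), Measure.restrict_apply hms]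
    by_cases hcond : ∀ k : Fin (p + 1), s (Fin.castAdd q k) = t k
    · have hsub : cyl s ⊆ cyl t := by
        intro x hx k
        exact (hx (Fin.castAdd q k)).trans (hcond k)
      have hsub' : cyl s' ⊆ cyl t' := by
        intro x hx k
        have h1 := hx (Fin.castAdd q k)
        have h2 : ((Fin.castAdd q k : Fin (p + 1 + q)) : ℕ) < p + 1 := k.isLt
        rw [hs'] at h1
        simp only [if_pos h2] at h1
        rw [hcond k] at h1
        have h3 : t' k = !(t k) := (not_decide_lt p k k.isLt).symm
        rw [h3]
        exact h1
      rw [Set.inter_eq_self_of_subset_left hsub', Set.inter_eq_self_of_subset_left hsub,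
        hνcyl s', hνcyl s]
      have expand' : (∏ i : Fin (p + 1 + q), w (s' i)) =
          (∏ k : Fin (p + 1), w (s' (Fin.castAdd q k))) *
            ∏ i : Fin q, w (s' (Fin.natAdd (p + 1) i)) :=
        Fin.prod_univ_add (f := fun i => w (s' i))
      have expand : (∏ i : Fin (p + 1 + q), w (s i)) =
          (∏ k : Fin (p + 1), w (s (Fin.castAdd q k))) *
            ∏ i : Fin q, w (s (Fin.natAdd (p + 1) i)) :=
        Fin.prod_univ_add (f := fun i => w (s i))
      rw [expand', expand]
      have head' : (∏ k : Fin (p + 1), w (s' (Fin.castAdd q k))) = w false ^ p * w true := by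
        rw [← prod_pattern_eq p w]
        refine Finset.prod_congr rfl fun k _ => ?_
        have h2 : ((Fin.castAdd q k : Fin (p + 1 + q)) : ℕ) < p + 1 := k.isLt
        rw [hs']
        simp only [if_pos h2]
        rw [hcond k, ht]
        rw [not_decide_lt p k k.isLt]
      have head : (∏ k : Fin (p + 1), w (s (Fin.castAdd q k))) = w true ^ p * w false := by
        rw [← prod_pattern_lt p w]
        exact Finset.prod_congr rfl fun k _ => by rw [hcond k, ht]
      have tail : (∏ i : Fin q, w (s' (Fin.natAdd (p + 1) i))) =
          ∏ i : Fin q, w (s (Fin.natAdd (p + 1) i)) := by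
        refine Finset.prod_congr rfl fun i _ => ?_
        have h2 : ¬ ((Fin.natAdd (p + 1) i : Fin (p + 1 + q)) : ℕ) < p + 1 := by
          simp [Fin.natAdd]; omega
        rw [hs']
        simp only [if_neg h2]
      rw [head', head, tail, ← mul_assoc, hs]
    · push_neg at hcond
      obtain ⟨k, hk⟩ := hcond
      have h1 : cyl s ∩ cyl t = ∅ := by
        refine Set.eq_empty_iff_forall_notMem.mpr ?_
        rintro x ⟨hx1, hx2⟩
        exact hk ((hx1 (Fin.castAdd q k)).symm.trans (hx2 k))
      have h2 : cyl s' ∩ cyl t' = ∅ := by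
        refine Set.eq_empty_iff_forall_notMem.mpr ?_
        rintro x ⟨hx1, hx2⟩
        have e1 := hx1 (Fin.castAdd q k)
        have hlt : ((Fin.castAdd q k : Fin (p + 1 + q)) : ℕ) < p + 1 := k.isLt
        rw [hs'] at e1
        simp only [if_pos hlt] at e1
        have e2 := hx2 k
        have h3 : t' k = !(t k) := (not_decide_lt p k k.isLt).symm
        rw [h3] at e2
        have : (!(s (Fin.castAdd q k))) = !(t k) := e1.symm.trans e2
        exact hk (Bool.not_inj this)
      rw [h1, h2]
      simp
  · rw [Measure.map_apply (measurable_flipF _) MeasurableSet.univ, Set.preimage_univ,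
      Measure.restrict_apply_univ, Measure.smul_apply, smul_eq_mul,
      Measure.restrict_apply_univ, hνcyl t', hνcyl t, ht, ht', prod_pattern_eq, prod_pattern_lt,
      hs]

/-- On the set `K_n` of sequences starting with `n-1` ones followed by a zero, the odometer
scales the Bernoulli measure `ν_a` by the factor `((1-a)/a)·(a/(1-a))^{n-1}`. -/
theorem measure_odometer_image_of_subset_K (a : ℝ) (ha0 : 0 < a) (ha : a ≤ 1 / 2)
    (ν : Measure (ℕ → Bool)) (hν : IsBernoulliProd a ν) (n : ℕ) (hn : 1 ≤ n)
    (E : Set (ℕ → Bool)) (hE : MeasurableSet E)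
    (hEK : E ⊆ {x | (∀ k < n - 1, x k = true) ∧ x (n - 1) = false}) :
    ν (odometer '' E) =
      ENNReal.ofReal ((1 - a) / a) * ENNReal.ofReal (a / (1 - a)) ^ (n - 1) * ν E := by
  obtain ⟨p, rfl⟩ : ∃ p, n = p + 1 := ⟨n - 1, (Nat.succ_pred_eq_of_pos hn).symm⟩
  simp only [Nat.add_sub_cancel] at hEK ⊢
  set t : Fin (p + 1) → Bool := fun k => decide ((k : ℕ) < p) with ht
  set t' : Fin (p + 1) → Bool := fun k => decide ((k : ℕ) = p) with ht'
  have hEK' : E ⊆ cyl t := by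
    intro x hx
    obtain ⟨h1, h2⟩ := hEK hx
    intro k
    rw [ht]
    by_cases hk : (k : ℕ) < p
    · simp only [hk, decide_eq_true_eq]
      simpa [hk] using h1 k hk
    · have hkp : (k : ℕ) = p := by have := k.isLt; omega
      simp only [hkp]
      simpa using h2
  have hodo : ∀ x ∈ E, odometer x = flipF (p + 1) x := by
    intro x hx
    obtain ⟨h1, h2⟩ := hEK hx
    funext k
    unfold odometer flipF
    by_cases hk : k < p + 1
    · rw [if_pos hk, if_pos]
      intro j hj
      exact h1 j (by omega)
    · rw [if_neg hk, if_neg]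
      intro hall
      have := hall p (by omega)
      rw [h2] at this
      exact Bool.false_ne_true this
  have himg : odometer '' E = flipF (p + 1) ⁻¹' E := by
    ext y
    constructor
    · rintro ⟨x, hx, rfl⟩
      rw [hodo x hx]
      show flipF (p + 1) (flipF (p + 1) x) ∈ E
      rw [flipF_invol]
      exact hx
    · intro hy
      exact ⟨flipF (p + 1) y, hy, by rw [hodo _ hy, flipF_invol]⟩
  have hsub' : flipF (p + 1) ⁻¹' E ⊆ cyl t' := by
    intro x hx
    have hFx := hEK' hx
    intro k
    have h1 := hFx k
    rw [ht'] at *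
    have hk : (k : ℕ) < p + 1 := k.isLt
    unfold flipF at h1
    rw [if_pos hk] at h1
    have h2 : x (k : ℕ) = !(t k) := by
      rw [← h1, Bool.not_not]
    rw [h2, ht, not_decide_lt p k k.isLt]
  have hmeas : MeasurableSet (flipF (p + 1) ⁻¹' E) := measurable_flipF _ hE
  have e1 : ν (flipF (p + 1) ⁻¹' E)
      = Measure.map (flipF (p + 1)) (ν.restrict (cyl t')) E := by
    rw [Measure.map_apply (measurable_flipF _) hE, Measure.restrict_apply hmeas,
      Set.inter_eq_self_of_subset_left hsub']
  rw [himg, e1, key a ha0 ha ν hν p]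
  rw [Measure.smul_apply, smul_eq_mul, Measure.restrict_apply hE,
    Set.inter_eq_self_of_subset_left hEK', mul_assoc]
end

section
/- Let 0 < a ≤ 1/2, let ν_a be the Bernoulli product measure on Ω = {0,1}^ℕ and g the dyadic odometer. Then the total variation norm of the signed measure g^{-1}_*(ν_a) − ν_a equals 2 − 4a. Equivalently, ‖dg^{-1}(ν_a)/dν_a − 1‖_{L^1(Ω,ν_a)} = 2 − 4a. -/
open MeasureTheory Filter Topology ENNReal

namespace OdoAux

def cyl (n : ℕ) (s : Fin n → Bool) : Set (ℕ → Bool) := {x | ∀ i : Fin n, x i = s i}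

lemma measurableSet_cyl (n : ℕ) (s : Fin n → Bool) : MeasurableSet (cyl n s) := by
  have : cyl n s = ⋂ i : Fin n, (fun x : ℕ → Bool => x (i : ℕ)) ⁻¹' {s i} := by
    ext x; simp [cyl]
  rw [this]
  exact MeasurableSet.iInter fun i => (measurable_pi_apply _) (measurableSet_singleton _)

def cvec (m : ℕ) : Fin (m + 1) → Bool := fun i => decide ((i : ℕ) < m)

def C (m : ℕ) : Set (ℕ → Bool) := cyl (m + 1) (cvec m)

lemma mem_C_iff {m : ℕ} {x : ℕ → Bool} :
    x ∈ C m ↔ (∀ k < m, x k = true) ∧ x m = false := by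
  simp only [C, cyl, Set.mem_setOf_eq, cvec]
  constructor
  · intro h
    refine ⟨fun k hk => ?_, ?_⟩
    · simpa [hk] using h ⟨k, by omega⟩
    · simpa using h ⟨m, by omega⟩
  · rintro ⟨h1, h2⟩ i
    rcases Nat.lt_or_ge (i : ℕ) m with hi | hi
    · simpa [hi] using h1 i hi
    · have : (i : ℕ) = m := by omega
      simp [this, h2]

def flip' (m : ℕ) (x : ℕ → Bool) : ℕ → Bool := fun n => if n ≤ m then !(x n) else x n

lemma measurable_flip' (m : ℕ) : Measurable (flip' m) := by
  apply measurable_pi_iff.2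
  intro n
  by_cases h : n ≤ m
  · simp only [flip', h, if_true]
    exact (Measurable.of_discrete (f := Bool.not)).comp (measurable_pi_apply n)
  · simp only [flip', h, if_false]
    exact measurable_pi_apply n

lemma measurable_odometerInv : Measurable odometerInv := by
  apply measurable_pi_iff.2
  intro n
  have hset : MeasurableSet {x : ℕ → Bool | ∀ k < n, x k = false} := by
    have : {x : ℕ → Bool | ∀ k < n, x k = false} =
        ⋂ k ∈ Finset.range n, (fun x : ℕ → Bool => x k) ⁻¹' {false} := by
      ext x; simp
    rw [this]
    exact MeasurableSet.biInter (Set.to_countable _)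
      fun k _ => (measurable_pi_apply k) (measurableSet_singleton _)
  exact Measurable.ite hset
    ((Measurable.of_discrete (f := Bool.not)).comp (measurable_pi_apply n)) (measurable_pi_apply n)

lemma flip'_preimage_cyl (m n : ℕ) (s : Fin n → Bool) :
    flip' m ⁻¹' cyl n s = cyl n (fun i => if (i : ℕ) ≤ m then !(s i) else s i) := by
  ext x
  simp only [cyl, Set.mem_preimage, Set.mem_setOf_eq]
  constructor
  · intro h i
    have hi := h i
    by_cases hm : (i : ℕ) ≤ m
    · simp only [flip', hm, if_true] at hi ⊢
      rw [← hi, Bool.not_not]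
    · simp only [flip', hm, if_false] at hi ⊢
      exact hi
  · intro h i
    have hi := h i
    by_cases hm : (i : ℕ) ≤ m
    · simp only [flip', hm, if_true] at hi ⊢
      rw [hi, Bool.not_not]
    · simp only [flip', hm, if_false] at hi ⊢
      exact hi

lemma odometerInv_eq_flip'_of (m : ℕ) {x : ℕ → Bool}
    (h1 : ∀ k < m, x k = false) (h2 : x m = true) :
    odometerInv x = flip' m x := by
  funext n
  rcases le_or_gt n m with hn | hn
  · have hc : ∀ k < n, x k = false := fun k hk => h1 k (by omega)
    simp only [odometerInv, flip']
    rw [if_pos hc, if_pos hn]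
  · have hc : ¬ ∀ k < n, x k = false := fun h => by simpa [h2] using h m hn
    simp only [odometerInv, flip']
    rw [if_neg hc, if_neg (by omega : ¬ n ≤ m)]

lemma pre_C (m : ℕ) {x : ℕ → Bool} (h : odometerInv x ∈ C m) :
    (∀ k < m, x k = false) ∧ x m = true := by
  rw [mem_C_iff] at h
  have key : ∀ k, k < m → x k = false := by
    intro k
    induction k using Nat.strong_induction_on with
    | _ k ih =>
      intro hk
      have hcond : ∀ j < k, x j = false := fun j hj => ih j hj (by omega)
      have hh := h.1 k hk
      simp only [odometerInv] at hh
      rw [if_pos hcond] at hh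
      simpa using hh
  refine ⟨key, ?_⟩
  have hh := h.2
  simp only [odometerInv] at hh
  rw [if_pos key] at hh
  simpa using hh

lemma odometerInv_preimage_eq (m : ℕ) (E : Set (ℕ → Bool)) (hE : E ⊆ C m) :
    odometerInv ⁻¹' E = flip' m ⁻¹' E := by
  ext x
  simp only [Set.mem_preimage]
  constructor
  · intro h
    have hx := pre_C m (hE h)
    rwa [odometerInv_eq_flip'_of m hx.1 hx.2] at h
  · intro h
    have hc := hE h
    rw [mem_C_iff] at hc
    have hx : (∀ k < m, x k = false) ∧ x m = true := by
      constructor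
      · intro k hk
        have := hc.1 k hk
        simp only [flip'] at this
        rw [if_pos (by omega : k ≤ m)] at this
        simpa using this
      · have := hc.2
        simp only [flip'] at this
        rw [if_pos (le_refl m)] at this
        simpa using this
    rwa [odometerInv_eq_flip'_of m hx.1 hx.2]

def cylSys (m : ℕ) : Set (Set (ℕ → Bool)) := {S | ∃ k s, S = cyl (m + 1 + k) s}

lemma cyl_inter_of_le {n₁ n₂ : ℕ} (h : n₁ ≤ n₂) (s₁ : Fin n₁ → Bool) (s₂ : Fin n₂ → Bool)
    (hne : (cyl n₁ s₁ ∩ cyl n₂ s₂).Nonempty) : cyl n₁ s₁ ∩ cyl n₂ s₂ = cyl n₂ s₂ := by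
  obtain ⟨x, hx₁, hx₂⟩ := hne
  refine Set.inter_eq_self_of_subset_right fun y hy i => ?_
  have hi2 : (i : ℕ) < n₂ := lt_of_lt_of_le i.2 h
  have h1 : x i = s₁ i := hx₁ i
  have h2 : x i = s₂ ⟨i, hi2⟩ := hx₂ ⟨i, hi2⟩
  have h3 : y i = s₂ ⟨i, hi2⟩ := hy ⟨i, hi2⟩
  rw [h3, ← h2, h1]

lemma isPiSystem_cylSys (m : ℕ) : IsPiSystem (cylSys m) := by
  rintro S₁ ⟨k₁, s₁, rfl⟩ S₂ ⟨k₂, s₂, rfl⟩ hne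
  rcases le_or_gt (m + 1 + k₁) (m + 1 + k₂) with h | h
  · rw [cyl_inter_of_le h s₁ s₂ hne]; exact ⟨k₂, s₂, rfl⟩
  · rw [Set.inter_comm] at hne ⊢
    rw [cyl_inter_of_le h.le s₂ s₁ hne]; exact ⟨k₁, s₁, rfl⟩

lemma generateFrom_cylSys (m : ℕ) :
    (inferInstance : MeasurableSpace (ℕ → Bool)) = .generateFrom (cylSys m) := by
  refine le_antisymm ?_ (MeasurableSpace.generateFrom_le ?_)
  · have hsingle : ∀ (i : ℕ) (b : Bool),
        MeasurableSet[.generateFrom (cylSys m)] ((fun x : ℕ → Bool => x i) ⁻¹' {b}) := by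
      intro i b
      have hi : i < m + 1 + (i + 1) := by omega
      have hset : (fun x : ℕ → Bool => x i) ⁻¹' {b} =
          ⋃ (s : Fin (m + 1 + (i + 1)) → Bool) (_ : s ⟨i, hi⟩ = b), cyl (m + 1 + (i + 1)) s := by
        ext x
        simp only [Set.mem_preimage, Set.mem_singleton_iff, Set.mem_iUnion]
        constructor
        · intro hx
          exact ⟨fun j => x j, hx, fun j => rfl⟩
        · rintro ⟨s, hs, hxs⟩
          have := hxs ⟨i, hi⟩
          simpa [hs] using this
      rw [hset]
      exact MeasurableSet.iUnion fun s => MeasurableSet.iUnion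
        fun _ => MeasurableSpace.measurableSet_generateFrom ⟨i + 1, s, rfl⟩
    have hpi : (inferInstance : MeasurableSpace (ℕ → Bool)) =
        ⨆ i : ℕ, MeasurableSpace.comap (fun x : ℕ → Bool => x i) inferInstance := rfl
    rw [hpi]
    refine iSup_le fun i => ?_
    intro s hs
    rcases hs with ⟨t, -, rfl⟩
    have : (fun x : ℕ → Bool => x i) ⁻¹' t = ⋃ b ∈ t, (fun x : ℕ → Bool => x i) ⁻¹' {b} := by
      ext x; simp
    rw [this]
    exact MeasurableSet.biUnion (Set.to_countable _) fun b _ => hsingle i b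
  · rintro S ⟨k, s, rfl⟩
    exact measurableSet_cyl _ _

section Meas

variable {a : ℝ} {ν : Measure (ℕ → Bool)}

lemma head_prod_true (ha0 : 0 ≤ a) (ha1 : a ≤ 1) (m : ℕ) :
    ∏ i : Fin (m + 1), ENNReal.ofReal (if cvec m i then 1 - a else a)
      = ENNReal.ofReal ((1 - a) ^ m * a) := by
  rw [Fin.prod_univ_castSucc]
  have h1 : ∀ i : Fin m, ENNReal.ofReal (if cvec m i.castSucc then 1 - a else a)
      = ENNReal.ofReal (1 - a) := by
    intro i
    have : ((i.castSucc : Fin (m + 1)) : ℕ) < m := by simp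
    simp [cvec, this]
  have h2 : cvec m (Fin.last m) = false := by simp [cvec]
  rw [Finset.prod_congr rfl (fun i _ => h1 i), Finset.prod_const, Finset.card_univ,
    Fintype.card_fin, h2]
  norm_num
  rw [← ENNReal.ofReal_pow (by linarith), ← ENNReal.ofReal_mul (pow_nonneg (by linarith) m)]

lemma head_prod_false (ha0 : 0 ≤ a) (ha1 : a ≤ 1) (m : ℕ) :
    ∏ i : Fin (m + 1), ENNReal.ofReal (if !(cvec m i) then 1 - a else a)
      = ENNReal.ofReal (a ^ m * (1 - a)) := by
  rw [Fin.prod_univ_castSucc]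
  have h1 : ∀ i : Fin m, ENNReal.ofReal (if !(cvec m i.castSucc) then 1 - a else a)
      = ENNReal.ofReal a := by
    intro i
    have : ((i.castSucc : Fin (m + 1)) : ℕ) < m := by simp
    simp [cvec, this]
  have h2 : cvec m (Fin.last m) = false := by simp [cvec]
  rw [Finset.prod_congr rfl (fun i _ => h1 i), Finset.prod_const, Finset.card_univ,
    Fintype.card_fin, h2]
  simp only [Bool.not_false, if_true]
  rw [← ENNReal.ofReal_pow ha0, ← ENNReal.ofReal_mul (by positivity)]

lemma measure_cyl_compat (ha0 : 0 ≤ a) (ha1 : a ≤ 1)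
    (hcyl : ∀ n s, ν (cyl n s) = ∏ i : Fin n, ENNReal.ofReal (if s i then 1 - a else a))
    (m k : ℕ) (s : Fin (m + 1 + k) → Bool)
    (hs : ∀ i : Fin (m + 1), s (Fin.castAdd k i) = cvec m i) :
    ν (cyl (m + 1 + k) s) = ENNReal.ofReal ((1 - a) ^ m * a) *
      ∏ i : Fin k, ENNReal.ofReal (if s (Fin.natAdd (m + 1) i) then 1 - a else a) := by
  rw [hcyl, Fin.prod_univ_add]
  congr 1
  rw [Finset.prod_congr rfl (fun i _ => by rw [hs i])]
  exact head_prod_true ha0 ha1 m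

lemma cyl_subset_C (m k : ℕ) (s : Fin (m + 1 + k) → Bool)
    (hs : ∀ i : Fin (m + 1), s (Fin.castAdd k i) = cvec m i) :
    cyl (m + 1 + k) s ⊆ C m := by
  intro x hx i
  have h := hx (Fin.castAdd k i)
  rw [hs i] at h
  simpa using h

lemma map_measure_cyl_compat (ha0 : 0 ≤ a) (ha1 : a ≤ 1)
    (hcyl : ∀ n s, ν (cyl n s) = ∏ i : Fin n, ENNReal.ofReal (if s i then 1 - a else a))
    (m k : ℕ) (s : Fin (m + 1 + k) → Bool)
    (hs : ∀ i : Fin (m + 1), s (Fin.castAdd k i) = cvec m i) :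
    (Measure.map odometerInv ν) (cyl (m + 1 + k) s) = ENNReal.ofReal (a ^ m * (1 - a)) *
      ∏ i : Fin k, ENNReal.ofReal (if s (Fin.natAdd (m + 1) i) then 1 - a else a) := by
  rw [Measure.map_apply measurable_odometerInv (measurableSet_cyl _ _),
    odometerInv_preimage_eq m _ (cyl_subset_C m k s hs), flip'_preimage_cyl, hcyl,
    Fin.prod_univ_add]
  congr 1
  · have hhead : ∀ i : Fin (m + 1),
        ENNReal.ofReal (if (if ((Fin.castAdd k i : Fin (m + 1 + k)) : ℕ) ≤ m then
            !(s (Fin.castAdd k i)) else s (Fin.castAdd k i)) then 1 - a else a)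
          = ENNReal.ofReal (if !(cvec m i) then 1 - a else a) := by
      intro i
      have hile : ((Fin.castAdd k i : Fin (m + 1 + k)) : ℕ) ≤ m := by
        have := i.2; simp; omega
      rw [if_pos hile, hs i]
    rw [Finset.prod_congr rfl (fun i _ => hhead i)]
    exact head_prod_false ha0 ha1 m
  · apply Finset.prod_congr rfl
    intro i _
    have : ¬ ((Fin.natAdd (m + 1) i : Fin (m + 1 + k)) : ℕ) ≤ m := by simp; omega
    rw [if_neg this]

noncomputable def ρ (a : ℝ) (m : ℕ) : ℝ≥0∞ :=
  ENNReal.ofReal (a ^ m * (1 - a)) / ENNReal.ofReal ((1 - a) ^ m * a)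

lemma ρ_mul (ha0 : 0 < a) (ha1 : a < 1) (m : ℕ) :
    ρ a m * ENNReal.ofReal ((1 - a) ^ m * a) = ENNReal.ofReal (a ^ m * (1 - a)) := by
  apply ENNReal.div_mul_cancel
  · rw [Ne, ENNReal.ofReal_eq_zero, not_le]
    have : (0:ℝ) < 1 - a := by linarith
    positivity
  · exact ENNReal.ofReal_ne_top

lemma restrict_map_eq (ha0 : 0 < a) (ha1 : a < 1) (hprob : IsProbabilityMeasure ν)
    (hcyl : ∀ n s, ν (cyl n s) = ∏ i : Fin n, ENNReal.ofReal (if s i then 1 - a else a))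
    (m : ℕ) :
    (Measure.map odometerInv ν).restrict (C m) = ρ a m • ν.restrict (C m) := by
  haveI := hprob
  haveI : IsProbabilityMeasure (Measure.map odometerInv ν) :=
    Measure.isProbabilityMeasure_map measurable_odometerInv.aemeasurable
  refine ext_of_generate_finite (cylSys m) (generateFrom_cylSys m) (isPiSystem_cylSys m) ?_ ?_
  · rintro S ⟨k, s, rfl⟩
    rw [Measure.restrict_apply (measurableSet_cyl _ _), Measure.smul_apply,
      Measure.restrict_apply (measurableSet_cyl _ _), smul_eq_mul]
    by_cases hs : ∀ i : Fin (m + 1), s (Fin.castAdd k i) = cvec m i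
    · rw [Set.inter_eq_self_of_subset_left (cyl_subset_C m k s hs),
        map_measure_cyl_compat ha0.le ha1.le hcyl m k s hs,
        measure_cyl_compat ha0.le ha1.le hcyl m k s hs, ← mul_assoc, ρ_mul ha0 ha1]
    · push_neg at hs
      obtain ⟨i₀, hi₀⟩ := hs
      have hempty : cyl (m + 1 + k) s ∩ C m = ∅ := by
        ext x
        simp only [Set.mem_inter_iff, Set.mem_empty_iff_false, iff_false, not_and]
        intro h1 h2
        apply hi₀
        have e1 := h1 (Fin.castAdd k i₀)
        have e2 := h2 i₀
        rw [← e1, ← e2]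
        simp
      rw [hempty]
      simp
  · rw [Measure.restrict_apply_univ, Measure.smul_apply, Measure.restrict_apply_univ,
      smul_eq_mul]
    have hs0 : ∀ i : Fin (m + 1), (cvec m : Fin (m + 1 + 0) → Bool) (Fin.castAdd 0 i)
        = cvec m i := by
      intro i
      simp [cvec]
    have h1 : (Measure.map odometerInv ν) (C m)
        = ENNReal.ofReal (a ^ m * (1 - a)) *
          ∏ i : Fin 0, ENNReal.ofReal (if (cvec m : Fin (m + 1 + 0) → Bool)
            (Fin.natAdd (m + 1) i) then 1 - a else a) :=
      map_measure_cyl_compat ha0.le ha1.le hcyl m 0 (cvec m) hs0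
    have h2 : ν (C m)
        = ENNReal.ofReal ((1 - a) ^ m * a) *
          ∏ i : Fin 0, ENNReal.ofReal (if (cvec m : Fin (m + 1 + 0) → Bool)
            (Fin.natAdd (m + 1) i) then 1 - a else a) :=
      measure_cyl_compat ha0.le ha1.le hcyl m 0 (cvec m) hs0
    simp only [Finset.univ_eq_empty, Finset.prod_empty, mul_one] at h1 h2
    rw [h1, h2, ρ_mul ha0 ha1]


lemma ρ_le_one (ha0 : 0 < a) (ha : a ≤ 1 / 2) {m : ℕ} (hm : 1 ≤ m) : ρ a m ≤ 1 := by
  have h1 : a ≤ 1 - a := by linarith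
  have hle : a ^ m * (1 - a) ≤ (1 - a) ^ m * a := by
    obtain ⟨j, rfl⟩ := Nat.exists_eq_add_of_le hm
    have hpow : a ^ j ≤ (1 - a) ^ j := pow_le_pow_left₀ ha0.le h1 j
    calc a ^ (1 + j) * (1 - a) = (a * (1 - a)) * a ^ j := by ring
      _ ≤ (a * (1 - a)) * (1 - a) ^ j := by
          apply mul_le_mul_of_nonneg_left hpow
          nlinarith
      _ = (1 - a) ^ (1 + j) * a := by ring
  calc ρ a m ≤ ENNReal.ofReal ((1 - a) ^ m * a) / ENNReal.ofReal ((1 - a) ^ m * a) :=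
        ENNReal.div_le_div_right (ENNReal.ofReal_le_ofReal hle) _
    _ ≤ 1 := ENNReal.div_self_le_one

lemma one_le_ρ_zero (ha0 : 0 < a) (ha : a ≤ 1 / 2) : 1 ≤ ρ a 0 := by
  rw [ρ]
  simp only [pow_zero, one_mul]
  rw [ENNReal.le_div_iff_mul_le (Or.inl (by rw [Ne, ENNReal.ofReal_eq_zero]; linarith))
    (Or.inl ENNReal.ofReal_ne_top), one_mul]
  exact ENNReal.ofReal_le_ofReal (by linarith)

lemma measure_allconst
    (hcyl : ∀ n s, ν (cyl n s) = ∏ i : Fin n, ENNReal.ofReal (if s i then 1 - a else a))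
    (b : Bool) (hp0 : 0 ≤ (if b then 1 - a else a)) (hp1 : (if b then 1 - a else a) < 1) :
    ν {x : ℕ → Bool | ∀ n, x n = b} = 0 := by
  set p := if b then 1 - a else a with hp
  have hb : ∀ n : ℕ, ν {x : ℕ → Bool | ∀ k, x k = b} ≤ ENNReal.ofReal (p ^ n) := by
    intro n
    have hsub : {x : ℕ → Bool | ∀ k, x k = b} ⊆ cyl n (fun _ => b) := fun x hx i => hx i
    refine le_trans (measure_mono hsub) ?_
    rw [hcyl]
    rw [Finset.prod_const, Finset.card_univ, Fintype.card_fin, ← ENNReal.ofReal_pow hp0]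
  have htend : Tendsto (fun n : ℕ => ENNReal.ofReal (p ^ n)) atTop (𝓝 0) := by
    have h1 : Tendsto (fun n : ℕ => p ^ n) atTop (𝓝 0) :=
      tendsto_pow_atTop_nhds_zero_of_lt_one hp0 hp1
    have h2 := (ENNReal.continuous_ofReal.tendsto 0).comp h1
    simpa [Function.comp_def] using h2
  have := ge_of_tendsto' htend hb
  simpa using this

lemma measurableSet_allconst (b : Bool) : MeasurableSet {x : ℕ → Bool | ∀ n, x n = b} := by
  have : {x : ℕ → Bool | ∀ n, x n = b} = ⋂ n, (fun x : ℕ → Bool => x n) ⁻¹' {b} := by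
    ext x; simp
  rw [this]
  exact MeasurableSet.iInter fun n => (measurable_pi_apply n) (measurableSet_singleton _)

lemma map_measure_allTrue (ha0 : 0 < a) (ha1 : a < 1)
    (hcyl : ∀ n s, ν (cyl n s) = ∏ i : Fin n, ENNReal.ofReal (if s i then 1 - a else a)) :
    (Measure.map odometerInv ν) {x : ℕ → Bool | ∀ n, x n = true} = 0 := by
  rw [Measure.map_apply measurable_odometerInv (measurableSet_allconst true)]
  refine measure_mono_null ?_ (measure_allconst hcyl false (by simpa using ha0.le)
    (by simpa using ha1))
  intro x hx
  simp only [Set.mem_preimage, Set.mem_setOf_eq] at hx ⊢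
  intro n
  induction n using Nat.strong_induction_on with
  | _ n ih =>
    have hcond : ∀ j < n, x j = false := fun j hj => ih j hj
    have h := hx n
    simp only [odometerInv] at h
    rw [if_pos hcond] at h
    simpa using h

lemma disjoint_C {i j : ℕ} (h : i ≠ j) : Disjoint (C i) (C j) := by
  rw [Set.disjoint_left]
  intro x hxi hxj
  rw [mem_C_iff] at hxi hxj
  rcases lt_or_gt_of_ne h with hlt | hlt
  · have h1 := hxj.1 i hlt
    rw [hxi.2] at h1
    cases h1
  · have h1 := hxi.1 j hlt
    rw [hxj.2] at h1
    cases h1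

lemma compl_C_zero : (C 0)ᶜ = {x : ℕ → Bool | x 0 = true} := by
  ext x
  simp [mem_C_iff]

lemma restrict_le_on_compl (ha0 : 0 < a) (ha : a ≤ 1 / 2) (hprob : IsProbabilityMeasure ν)
    (hcyl : ∀ n s, ν (cyl n s) = ∏ i : Fin n, ENNReal.ofReal (if s i then 1 - a else a)) :
    (Measure.map odometerInv ν).restrict ((C 0)ᶜ) ≤ ν.restrict ((C 0)ᶜ) := by
  have ha1 : a < 1 := by linarith
  set μ := Measure.map odometerInv ν with hμdef
  rw [Measure.le_iff]
  intro s hs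
  rw [Measure.restrict_apply hs, Measure.restrict_apply hs]
  set T := {x : ℕ → Bool | ∀ n, x n = true} with hTdef
  have hsub : s ∩ (C 0)ᶜ ⊆ (⋃ j : ℕ, s ∩ C (j + 1)) ∪ T := by
    rintro x ⟨hxs, hxc⟩
    by_cases hex : ∃ n, x n = false
    · left
      have h0 : x 0 = true := by
        rw [compl_C_zero] at hxc
        exact hxc
      have hn : x (Nat.find hex) = false := Nat.find_spec hex
      have hmin : ∀ k < Nat.find hex, x k = true := by
        intro k hk
        have := Nat.find_min hex hk
        simpa using this
      have hn0 : Nat.find hex ≠ 0 := by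
        intro h
        rw [h, h0] at hn
        cases hn
      obtain ⟨j, hj⟩ := Nat.exists_eq_succ_of_ne_zero hn0
      refine Set.mem_iUnion.2 ⟨j, hxs, ?_⟩
      rw [mem_C_iff]
      rw [show j + 1 = Nat.find hex by omega]
      exact ⟨hmin, hn⟩
    · right
      push_neg at hex
      intro n
      simpa using hex n
  calc μ (s ∩ (C 0)ᶜ) ≤ μ ((⋃ j : ℕ, s ∩ C (j + 1)) ∪ T) := measure_mono hsub
    _ ≤ μ (⋃ j : ℕ, s ∩ C (j + 1)) + μ T := measure_union_le _ _
    _ = μ (⋃ j : ℕ, s ∩ C (j + 1)) := by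
        rw [hμdef, hTdef, map_measure_allTrue ha0 ha1 hcyl, add_zero]
    _ ≤ ∑' j : ℕ, μ (s ∩ C (j + 1)) := measure_iUnion_le _
    _ ≤ ∑' j : ℕ, ν (s ∩ C (j + 1)) := by
        apply ENNReal.tsum_le_tsum
        intro j
        have h1 : μ (s ∩ C (j + 1)) = (μ.restrict (C (j + 1))) s := by
          rw [Measure.restrict_apply hs]
        rw [h1, hμdef, restrict_map_eq ha0 ha1 hprob hcyl (j + 1), Measure.smul_apply,
          smul_eq_mul, Measure.restrict_apply hs]
        exact mul_le_of_le_one_left zero_le (ρ_le_one ha0 ha (by omega))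
    _ = ν (⋃ j : ℕ, s ∩ C (j + 1)) := by
        rw [measure_iUnion]
        · intro i j hij
          exact Set.disjoint_left.2 fun x hxi hxj =>
            (Set.disjoint_left.1 (disjoint_C (by omega))) hxi.2 hxj.2
        · exact fun j => hs.inter (measurableSet_cyl _ _)
    _ ≤ ν (s ∩ (C 0)ᶜ) := by
        apply measure_mono
        rintro x hx
        obtain ⟨j, hxs, hxc⟩ := Set.mem_iUnion.1 hx
        refine ⟨hxs, ?_⟩
        rw [compl_C_zero]
        exact (mem_C_iff.1 hxc).1 0 (by omega)

lemma restrict_ge_on_C (ha0 : 0 < a) (ha : a ≤ 1 / 2) (hprob : IsProbabilityMeasure ν)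
    (hcyl : ∀ n s, ν (cyl n s) = ∏ i : Fin n, ENNReal.ofReal (if s i then 1 - a else a)) :
    ν.restrict (C 0) ≤ (Measure.map odometerInv ν).restrict (C 0) := by
  rw [restrict_map_eq ha0 (by linarith) hprob hcyl 0, Measure.le_iff]
  intro s hs
  rw [Measure.smul_apply, smul_eq_mul]
  exact le_mul_of_one_le_left zero_le (one_le_ρ_zero ha0 ha)



end Meas

end OdoAux

open OdoAux in
/-- The total variation norm of `g^{-1}_*(ν_a) - ν_a` equals `2 - 4a`. -/
theorem tvDist_odometerInv_pushforward (a : ℝ) (ha0 : 0 < a) (ha : a ≤ 1 / 2)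
    (ν : Measure (ℕ → Bool)) (hν : IsBernoulliProd a ν) :
    tvDist (Measure.map odometerInv ν) ν = ENNReal.ofReal (2 - 4 * a) := by
  obtain ⟨hprob, hcylset⟩ := hν
  haveI := hprob
  have hcyl : ∀ (n : ℕ) (s : Fin n → Bool),
      ν (cyl n s) = ∏ i : Fin n, ENNReal.ofReal (if s i then 1 - a else a) := hcylset
  have ha1 : a < 1 := by linarith
  set μ := Measure.map odometerInv ν with hμdef
  haveI : IsProbabilityMeasure μ :=
    Measure.isProbabilityMeasure_map measurable_odometerInv.aemeasurable
  have hCmeas : MeasurableSet (C 0) := measurableSet_cyl _ _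
  -- the four values
  have hs0 : ∀ i : Fin (0 + 1), (cvec 0 : Fin (0 + 1 + 0) → Bool) (Fin.castAdd 0 i)
      = cvec 0 i := by intro i; simp [cvec]
  have hμC : μ (C 0) = ENNReal.ofReal (1 - a) := by
    have h := map_measure_cyl_compat ha0.le ha1.le hcyl 0 0 (cvec 0) hs0
    simpa [C] using h
  have hνC : ν (C 0) = ENNReal.ofReal a := by
    have h := measure_cyl_compat ha0.le ha1.le hcyl 0 0 (cvec 0) hs0
    simpa [C] using h
  have hμCc : μ (C 0)ᶜ = ENNReal.ofReal a := by
    rw [measure_compl hCmeas (measure_ne_top _ _), hμC, measure_univ,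
      ← ENNReal.ofReal_one, ← ENNReal.ofReal_sub _ (by linarith : (0:ℝ) ≤ 1 - a)]
    norm_num
  have hνCc : ν (C 0)ᶜ = ENNReal.ofReal (1 - a) := by
    rw [measure_compl hCmeas (measure_ne_top _ _), hνC, measure_univ,
      ← ENNReal.ofReal_one, ← ENNReal.ofReal_sub _ ha0.le]
  have hle1 : μ.restrict ((C 0)ᶜ) ≤ ν.restrict ((C 0)ᶜ) :=
    restrict_le_on_compl ha0 ha hprob hcyl
  have hle2 : ν.restrict (C 0) ≤ μ.restrict (C 0) :=
    restrict_ge_on_C ha0 ha hprob hcyl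
  have e1 : (μ - ν) Set.univ = ENNReal.ofReal (1 - 2 * a) := by
    rw [← measure_add_measure_compl (μ := μ - ν) hCmeas,
      Measure.sub_apply_eq_zero_of_restrict_le_restrict hle1 hCmeas.compl, add_zero,
      ← Measure.restrict_apply_self, Measure.restrict_sub_eq_restrict_sub_restrict hCmeas,
      Measure.sub_apply hCmeas hle2, Measure.restrict_apply_self,
      Measure.restrict_apply_self, hμC, hνC, ← ENNReal.ofReal_sub _ ha0.le]
    congr 1
    ring
  have e2 : (ν - μ) Set.univ = ENNReal.ofReal (1 - 2 * a) := by
    rw [← measure_add_measure_compl (μ := ν - μ) hCmeas,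
      Measure.sub_apply_eq_zero_of_restrict_le_restrict hle2 hCmeas, zero_add,
      ← Measure.restrict_apply_self, Measure.restrict_sub_eq_restrict_sub_restrict hCmeas.compl,
      Measure.sub_apply hCmeas.compl hle1, Measure.restrict_apply_self,
      Measure.restrict_apply_self, hνCc, hμCc, ← ENNReal.ofReal_sub _ ha0.le]
    congr 1
    ring
  rw [tvDist, e1, e2, ← ENNReal.ofReal_add (by linarith) (by linarith)]
  congr 1
  ring
end

section
/- Let 0 < a ≤ 1/2, let θ = (θ_s)_{s∈ℝ} be the flow on L^∞({0,1}^ℕ × [0,1), ν_a × dx) induced by the flow built under the constant ceiling 1 over the dyadic odometer. Then for every f ∈ L^∞, lim_{n→∞} ‖θ_{2^n}(f) − f‖_{L^2(ν_a × dx)} = 0. -/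
open MeasureTheory Filter Topology ENNReal

/-- The `m`-th power (for `m : ℤ`) of the dyadic odometer. -/
def odometerZ (m : ℤ) (x : ℕ → Bool) : ℕ → Bool :=
  if 0 ≤ m then odometer^[m.toNat] x else odometerInv^[(-m).toNat] x

/-- The flow built under the constant ceiling function `1` over the dyadic odometer:
`g̃_s(x, y) = (g^n x, y′)` where `s + y = n + y′`, `n ∈ ℤ`, `0 ≤ y′ < 1`. -/
noncomputable def flowMap (s : ℝ) (z : (ℕ → Bool) × ℝ) : (ℕ → Bool) × ℝ :=
  (odometerZ ⌊s + z.2⌋ z.1, Int.fract (s + z.2))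

private lemma odoInv_eq (u : ℕ → Bool) (q : ℕ) :
    odometerInv u q = if (∀ k < q, u k = false) then !(u q) else u q := rfl

lemma odometerInv_odometerInv (z w : ℕ → Bool) (hw : ∀ j, w j = z (1 + j)) (m : ℕ) :
    odometerInv (odometerInv z) m = if m = 0 then z 0 else odometerInv w (m - 1) := by
  rcases Nat.eq_zero_or_pos m with rfl | hm
  · rw [if_pos rfl, odoInv_eq (odometerInv z) 0,
      if_pos (fun k hk => absurd hk (Nat.not_lt_zero k)), odoInv_eq z 0,
      if_pos (fun k hk => absurd hk (Nat.not_lt_zero k)), Bool.not_not]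
  · obtain ⟨p, rfl⟩ : ∃ p, m = p + 1 := ⟨m - 1, by omega⟩
    rw [if_neg (by omega)]
    simp only [Nat.add_sub_cancel]
    rw [odoInv_eq (odometerInv z) (p + 1), odoInv_eq w p]
    cases hz0 : z 0 with
    | true =>
      have h1 : odometerInv z 0 = false := by
        rw [odoInv_eq z 0, if_pos (fun k hk => absurd hk (Nat.not_lt_zero k)), hz0]; rfl
      have hrest : ∀ k, 0 < k → odometerInv z k = z k := by
        intro k hk; rw [odoInv_eq z k, if_neg]
        push_neg
        exact ⟨0, hk, by simp [hz0]⟩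
      have hcond : (∀ k < p + 1, odometerInv z k = false) ↔ (∀ k < p, w k = false) := by
        constructor
        · intro h k hk
          rw [hw k]
          have := h (1 + k) (by omega)
          rwa [hrest (1 + k) (by omega)] at this
        · intro h k hk
          rcases Nat.eq_zero_or_pos k with rfl | hk0
          · exact h1
          · rw [hrest k hk0]
            have := h (k - 1) (by omega)
            rw [hw (k - 1), show 1 + (k - 1) = k by omega] at this
            exact this
      have hval : odometerInv z (p + 1) = w p := by
        rw [hrest _ (Nat.succ_pos p), hw p]
        congr 1
        omega
      rw [hval]
      by_cases h : ∀ k < p, w k = false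
      · rw [if_pos (hcond.2 h), if_pos h]
      · rw [if_neg (fun hc => h (hcond.1 hc)), if_neg h]
    | false =>
      have h1 : odometerInv z 0 = true := by
        rw [odoInv_eq z 0, if_pos (fun k hk => absurd hk (Nat.not_lt_zero k)), hz0]; rfl
      rw [if_neg (by push_neg; exact ⟨0, by omega, by simp [h1]⟩)]
      rw [odoInv_eq z (p + 1)]
      have hcond : (∀ k < p + 1, z k = false) ↔ (∀ k < p, w k = false) := by
        constructor
        · intro h k hk
          rw [hw k]
          exact h (1 + k) (by omega)
        · intro h k hk
          rcases Nat.eq_zero_or_pos k with rfl | hk0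
          · exact hz0
          · have := h (k - 1) (by omega)
            rw [hw (k - 1), show 1 + (k - 1) = k by omega] at this
            exact this
      have hval : z (p + 1) = w p := by rw [hw p]; congr 1; omega
      rw [hval]
      by_cases h : ∀ k < p, w k = false
      · rw [if_pos (hcond.2 h), if_pos h]
      · rw [if_neg (fun hc => h (hcond.1 hc)), if_neg h]

lemma odometerInv_iterate_two_pow (n : ℕ) (x : ℕ → Bool) (m : ℕ) :
    odometerInv^[2 ^ n] x m =
      if m < n then x m else odometerInv (fun j => x (n + j)) (m - n) := by
  induction n generalizing x m with
  | zero =>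
    simp only [pow_zero, Function.iterate_one, Nat.not_lt_zero, if_false, Nat.sub_zero]
    have : (fun j => x (0 + j)) = x := by funext j; rw [Nat.zero_add]
    rw [this]
  | succ n ih =>
    have h2 : 2 ^ (n + 1) = 2 ^ n + 2 ^ n := by ring
    rw [h2, Function.iterate_add_apply]
    rw [ih (odometerInv^[2 ^ n] x) m]
    by_cases hmn : m < n
    · rw [if_pos hmn, if_pos (by omega), ih x m, if_pos hmn]
    · rw [if_neg hmn]
      have hyt : (fun j => odometerInv^[2 ^ n] x (n + j)) =
          odometerInv (fun j => x (n + j)) := by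
        funext j
        rw [ih x (n + j), if_neg (by omega)]
        congr 1
        omega
      rw [hyt, odometerInv_odometerInv (fun j => x (n + j)) (fun j => x (n + 1 + j))
        (fun j => by show x (n + 1 + j) = x (n + (1 + j)); congr 1; omega)]
      by_cases hm : m - n = 0
      · rw [if_pos hm, if_pos (by omega)]
        show x (n + 0) = x m
        congr 1
        omega
      · rw [if_neg hm, if_neg (by omega)]
        congr 1
        all_goals omega

def cylN (m : ℕ) (s : ℕ → Bool) : Set (ℕ → Bool) := {x | ∀ i < m, x i = s i}

def cylSets : Set (Set (ℕ → Bool)) := {S | ∃ m s, S = cylN m s}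

lemma mem_cylN {x : ℕ → Bool} {m : ℕ} {s : ℕ → Bool} :
    x ∈ cylN m s ↔ ∀ i < m, x i = s i := Iff.rfl

lemma measurableSet_cylN (m : ℕ) (s : ℕ → Bool) : MeasurableSet (cylN m s) := by
  have h : cylN m s = ⋂ i ∈ Finset.range m, (fun x : ℕ → Bool => x i) ⁻¹' {s i} := by
    ext x
    simp [cylN, Set.mem_iInter, Finset.mem_range]
  rw [h]
  exact MeasurableSet.biInter (Set.to_countable _)
    (fun i _ => (measurable_pi_apply i) (measurableSet_singleton (s i)))

lemma cylN_zero (s : ℕ → Bool) : cylN 0 s = Set.univ := by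
  ext x; simp [cylN]

lemma isPiSystem_cylSets : IsPiSystem cylSets := by
  rintro S ⟨m, s, rfl⟩ T ⟨m', t, rfl⟩ hne
  obtain ⟨y, hys, hyt⟩ := hne
  rcases le_total m m' with hmm | hmm
  · refine ⟨m', t, ?_⟩
    apply Set.eq_of_subset_of_subset Set.inter_subset_right
    refine fun x hx => ⟨fun i hi => ?_, hx⟩
    rw [hx i (by omega), ← hyt i (by omega), hys i hi]
  · refine ⟨m, s, ?_⟩
    apply Set.eq_of_subset_of_subset Set.inter_subset_left
    refine fun x hx => ⟨hx, fun i hi => ?_⟩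
    rw [hx i (by omega), ← hys i (by omega), hyt i hi]

lemma coord_mem_generateFrom (i : ℕ) (b : Bool) :
    MeasurableSet[MeasurableSpace.generateFrom cylSets] {x : ℕ → Bool | x i = b} := by
  have h : {x : ℕ → Bool | x i = b} =
      ⋃ (t : Fin (i + 1) → Bool) (_ : t ⟨i, Nat.lt_succ_self i⟩ = b),
        cylN (i + 1) (fun j => if h : j < i + 1 then t ⟨j, h⟩ else false) := by
    ext x
    simp only [Set.mem_iUnion, Set.mem_setOf_eq]
    constructor
    · intro hx
      refine ⟨fun j => x j, hx, ?_⟩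
      intro j hj
      simp [hj]
    · rintro ⟨t, ht, hmem⟩
      have h2 := hmem i (Nat.lt_succ_self i)
      simp only [Nat.lt_succ_self, dif_pos] at h2
      rw [h2, ht]
  rw [h]
  exact MeasurableSet.iUnion fun t => MeasurableSet.iUnion fun _ =>
    MeasurableSpace.measurableSet_generateFrom ⟨i + 1, _, rfl⟩

lemma generateFrom_cylSets :
    (inferInstance : MeasurableSpace (ℕ → Bool)) = MeasurableSpace.generateFrom cylSets := by
  apply le_antisymm
  · rw [show (inferInstance : MeasurableSpace (ℕ → Bool)) = MeasurableSpace.pi from rfl,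
      MeasurableSpace.pi_eq_generateFrom_projections]
    apply MeasurableSpace.generateFrom_le
    rintro B ⟨i, A, -, rfl⟩
    have h : Function.eval i ⁻¹' A = ⋃ b ∈ A, {x : ℕ → Bool | x i = b} := by
      ext x
      simp [Function.eval]
    rw [h]
    exact MeasurableSet.biUnion (A.to_countable) fun b _ => coord_mem_generateFrom i b
  · exact MeasurableSpace.generateFrom_le fun S hS => by
      obtain ⟨m, s, rfl⟩ := hS
      exact measurableSet_cylN m s

lemma cylN_split (m : ℕ) (s : ℕ → Bool) (μ : Measure (ℕ → Bool)) :
    μ (cylN m s) = μ (cylN (m + 1) (fun i => if i = m then false else s i))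
      + μ (cylN (m + 1) (fun i => if i = m then true else s i)) := by
  have hsub : ∀ b : Bool, cylN (m + 1) (fun i => if i = m then b else s i) =
      cylN m s ∩ {x | x m = b} := by
    intro b
    ext x
    simp only [mem_cylN, Set.mem_inter_iff, Set.mem_setOf_eq]
    constructor
    · intro hx
      refine ⟨fun i hi => ?_, ?_⟩
      · have h2 := hx i (by omega)
        simpa [show i ≠ m by omega] using h2
      · have h2 := hx m (by omega)
        simpa using h2
    · rintro ⟨hx, hxm⟩ i hi
      by_cases him : i = m
      · simp [him, hxm]
      · simp [him, hx i (by omega)]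
  have hunion : cylN m s = cylN (m + 1) (fun i => if i = m then false else s i)
      ∪ cylN (m + 1) (fun i => if i = m then true else s i) := by
    rw [hsub, hsub]
    ext x
    constructor
    · intro hx
      cases hxm : x m
      · exact Or.inl ⟨hx, hxm⟩
      · exact Or.inr ⟨hx, hxm⟩
    · rintro (⟨hx, _⟩ | ⟨hx, _⟩) <;> exact hx
  rw [hunion]
  apply measure_union
  · rw [hsub, hsub]
    apply Set.disjoint_left.2
    rintro x ⟨_, hf⟩ ⟨_, ht⟩
    simp only [Set.mem_setOf_eq] at hf ht
    rw [hf] at ht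
    exact Bool.false_ne_true ht
  · exact measurableSet_cylN _ _

lemma measure_ext_of_cylN (N : ℕ) (μ₁ μ₂ : Measure (ℕ → Bool)) [IsFiniteMeasure μ₁]
    [IsFiniteMeasure μ₂]
    (h : ∀ m, N ≤ m → ∀ s, μ₁ (cylN m s) = μ₂ (cylN m s)) : μ₁ = μ₂ := by
  have key : ∀ d m, m + d = N → ∀ s, μ₁ (cylN m s) = μ₂ (cylN m s) := by
    intro d
    induction d with
    | zero => intro m hm s; exact h m (by omega) s
    | succ d ih =>
      intro m hm s
      rw [cylN_split m s μ₁, cylN_split m s μ₂, ih (m + 1) (by omega) _,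
        ih (m + 1) (by omega) _]
  have hall : ∀ m s, μ₁ (cylN m s) = μ₂ (cylN m s) := by
    intro m s
    by_cases hm : N ≤ m
    · exact h m hm s
    · exact key (N - m) m (by omega) s
  refine MeasureTheory.ext_of_generate_finite cylSets generateFrom_cylSets isPiSystem_cylSets
    ?_ ?_
  · rintro S ⟨m, s, rfl⟩
    exact hall m s
  · rw [← cylN_zero (fun _ => false)]
    exact hall 0 _

noncomputable def wB (a : ℝ) : Bool → ℝ≥0∞ := fun b => ENNReal.ofReal (if b then 1 - a else a)


section Bern
variable {a : ℝ} {ν : Measure (ℕ → Bool)} (hν : IsBernoulliProd a ν)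

lemma bern_cylN (hν : IsBernoulliProd a ν) (m : ℕ) (s : ℕ → Bool) :
    ν (cylN m s) = ∏ i ∈ Finset.range m, wB a (s i) := by
  have h1 : cylN m s = {x | ∀ i : Fin m, x i = s i} := by
    ext x
    exact ⟨fun h i => h i i.isLt, fun h i hi => h ⟨i, hi⟩⟩
  rw [h1, hν.2 m (fun i => s i), ← Fin.prod_univ_eq_prod_range (fun i => wB a (s i)) m]
  rfl

lemma sum_prod_wB (h0 : 0 ≤ a) (h1 : a ≤ 1) (n : ℕ) :
    ∑ t : Fin n → Bool, ∏ i : Fin n, wB a (t i) = 1 := by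
  classical
  have h2 : ∑ t ∈ Fintype.piFinset (fun _ : Fin n => (Finset.univ : Finset Bool)),
      ∏ i : Fin n, wB a (t i) = ∏ _i : Fin n, ∑ b : Bool, wB a b :=
    (Finset.prod_univ_sum _ _).symm
  rw [Fintype.piFinset_univ] at h2
  rw [h2]
  have h3 : ∑ b : Bool, wB a b = 1 := by
    have : wB a true = ENNReal.ofReal (1 - a) := by simp [wB]
    have h4 : wB a false = ENNReal.ofReal a := by simp [wB]
    rw [Fintype.sum_bool, this, h4, ← ENNReal.ofReal_add (by linarith) h0]
    norm_num
  rw [h3, Finset.prod_const_one]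

/-- the set of sequences that are `false` from position `n` on is null. -/
lemma bern_tail_false_null (hν : IsBernoulliProd a ν) (h0 : 0 ≤ a) (h1 : a ≤ 1) (halt : ENNReal.ofReal a < 1) (n : ℕ) :
    ν {x : ℕ → Bool | ∀ k, x (n + k) = false} = 0 := by
  classical
  have key : ∀ m : ℕ, ν {x : ℕ → Bool | ∀ k, x (n + k) = false} ≤ ENNReal.ofReal a ^ m := by
    intro m
    set ext : (Fin n → Bool) → (ℕ → Bool) :=
      fun t i => if h : i < n then t ⟨i, h⟩ else false with hext
    have hsub : {x : ℕ → Bool | ∀ k, x (n + k) = false} ⊆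
        ⋃ t : Fin n → Bool, cylN (n + m) (ext t) := by
      intro x hx
      refine Set.mem_iUnion.2 ⟨fun i => x i, fun i hi => ?_⟩
      by_cases h : i < n
      · simp [hext, h]
      · have : x i = false := by
          have := hx (i - n)
          rwa [show n + (i - n) = i by omega] at this
        simp [hext, h, this]
    have hmeas : ∀ t : Fin n → Bool, MeasurableSet (cylN (n + m) (ext t)) :=
      fun t => measurableSet_cylN _ _
    have hdisj : Pairwise (Function.onFun Disjoint fun t : Fin n → Bool =>
        cylN (n + m) (ext t)) := by
      intro t t' htt'
      apply Set.disjoint_left.2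
      intro x hx hx'
      apply htt'
      funext i
      have e1 := hx i (by omega)
      have e2 := hx' i (by omega)
      rw [e1] at e2
      simpa [hext, i.isLt] using e2
    calc ν {x : ℕ → Bool | ∀ k, x (n + k) = false}
        ≤ ν (⋃ t : Fin n → Bool, cylN (n + m) (ext t)) := measure_mono hsub
      _ = ∑ t : Fin n → Bool, ν (cylN (n + m) (ext t)) := by
          rw [measure_iUnion hdisj hmeas, tsum_fintype]
      _ = ∑ t : Fin n → Bool, (∏ i : Fin n, wB a (t i)) * ENNReal.ofReal a ^ m := by
          apply Finset.sum_congr rfl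
          intro t _
          rw [bern_cylN hν, Finset.prod_range_add]
          congr 1
          · rw [← Fin.prod_univ_eq_prod_range (fun i => wB a (ext t i)) n]
            apply Finset.prod_congr rfl
            intro i _
            congr 1
            simp [hext, i.isLt]
          · have : ∀ i, wB a (ext t (n + i)) = ENNReal.ofReal a := by
              intro i
              simp [hext, wB, show ¬(n + i < n) by omega]
            calc ∏ i ∈ Finset.range m, wB a (ext t (n + i))
                = ∏ _i ∈ Finset.range m, ENNReal.ofReal a :=
                  Finset.prod_congr rfl (fun i _ => this i)
              _ = ENNReal.ofReal a ^ m := by rw [Finset.prod_const, Finset.card_range]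
      _ = ENNReal.ofReal a ^ m := by
          rw [← Finset.sum_mul, sum_prod_wB h0 h1, one_mul]
  have htend := ENNReal.tendsto_pow_atTop_nhds_zero_of_lt_one halt
  have := ge_of_tendsto' htend key
  simpa using this
end Bern

def flipIcc (n j : ℕ) : (ℕ → Bool) → (ℕ → Bool) :=
  fun x i => if n ≤ i ∧ i ≤ n + j then !(x i) else x i

def patF (n j : ℕ) : Set (ℕ → Bool) :=
  {x | (∀ k < j, x (n + k) = true) ∧ x (n + j) = false}

lemma measurable_flipIcc (n j : ℕ) : Measurable (flipIcc n j) := by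
  apply measurable_pi_iff.2
  intro i
  by_cases h : n ≤ i ∧ i ≤ n + j
  · simp only [flipIcc, if_pos h]
    exact (measurable_of_countable Bool.not).comp (measurable_pi_apply i)
  · simp only [flipIcc, if_neg h]
    exact measurable_pi_apply i

lemma measurableSet_patF (n j : ℕ) : MeasurableSet (patF n j) := by
  have h : patF n j = (⋂ k ∈ Finset.range j, (fun x : ℕ → Bool => x (n + k)) ⁻¹' {true})
      ∩ (fun x : ℕ → Bool => x (n + j)) ⁻¹' {false} := by
    ext x
    simp [patF, Set.mem_iInter]
  rw [h]
  exact (MeasurableSet.biInter (Set.to_countable _)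
    (fun k _ => (measurable_pi_apply _) (measurableSet_singleton _))).inter
    ((measurable_pi_apply _) (measurableSet_singleton _))

lemma flipIcc_involutive (n j : ℕ) : Function.Involutive (flipIcc n j) := by
  intro x
  funext i
  by_cases h : n ≤ i ∧ i ≤ n + j <;> simp [flipIcc, h]

lemma flipIcc_preimage_cylN (n j m : ℕ) (s : ℕ → Bool) :
    flipIcc n j ⁻¹' cylN m s =
      cylN m (fun i => if n ≤ i ∧ i ≤ n + j then !(s i) else s i) := by
  ext x
  simp only [Set.mem_preimage, cylN, Set.mem_setOf_eq]
  constructor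
  · intro h i hi
    have h2 := h i hi
    by_cases hc : n ≤ i ∧ i ≤ n + j
    · simp only [flipIcc, if_pos hc] at h2 ⊢
      rw [← h2, Bool.not_not]
    · simpa [flipIcc, if_neg hc] using h2
  · intro h i hi
    have h2 := h i hi
    by_cases hc : n ≤ i ∧ i ≤ n + j
    · simp only [flipIcc, if_pos hc] at h2 ⊢
      rw [h2, Bool.not_not]
    · simpa [flipIcc, if_neg hc] using h2

section KeyFlip
variable {a : ℝ} {ν : Measure (ℕ → Bool)}

lemma key_flip (hν : IsBernoulliProd a ν) (ha0 : 0 < a) (ha1 : a < 1) (n j : ℕ)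
    (A : Set (ℕ → Bool)) (hA : MeasurableSet A) :
    ν (flipIcc n j ⁻¹' (A ∩ patF n j)) =
      (ENNReal.ofReal (a / (1 - a)) ^ j * ENNReal.ofReal ((1 - a) / a)) * ν (A ∩ patF n j) := by
  haveI : IsProbabilityMeasure ν := hν.1
  set c : ℝ≥0∞ := ENNReal.ofReal (a / (1 - a)) ^ j * ENNReal.ofReal ((1 - a) / a) with hc
  have hc_ne_top : c ≠ ⊤ := by
    rw [hc]
    exact (ENNReal.mul_lt_top (ENNReal.pow_lt_top ENNReal.ofReal_lt_top)
      ENNReal.ofReal_lt_top).ne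
  set μ₁ : Measure (ℕ → Bool) :=
    (ν.restrict (flipIcc n j ⁻¹' patF n j)).map (flipIcc n j) with hμ₁
  set μ₂ : Measure (ℕ → Bool) := c • ν.restrict (patF n j) with hμ₂
  have hμ₁_apply : ∀ B : Set (ℕ → Bool), MeasurableSet B →
      μ₁ B = ν (flipIcc n j ⁻¹' (B ∩ patF n j)) := by
    intro B hB
    rw [hμ₁, Measure.map_apply (measurable_flipIcc n j) hB,
      Measure.restrict_apply ((measurable_flipIcc n j) hB), Set.preimage_inter]
  haveI : IsFiniteMeasure μ₁ := by
    constructor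
    rw [hμ₁_apply Set.univ MeasurableSet.univ]
    exact measure_lt_top ν _
  haveI : IsFiniteMeasure μ₂ := by
    constructor
    rw [hμ₂, Measure.smul_apply, smul_eq_mul]
    exact ENNReal.mul_lt_top hc_ne_top.lt_top (measure_lt_top _ _)
  have hmain : μ₁ = μ₂ := by
    apply measure_ext_of_cylN (n + j + 1)
    intro m hm s
    have hμ₂_eval : μ₂ (cylN m s) = c * ν (cylN m s ∩ patF n j) := by
      rw [hμ₂, Measure.smul_apply, smul_eq_mul,
        Measure.restrict_apply (measurableSet_cylN m s)]
    rw [hμ₁_apply _ (measurableSet_cylN m s), hμ₂_eval]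
    by_cases hpat : (∀ k < j, s (n + k) = true) ∧ s (n + j) = false
    · -- compatible case
      have hsubF : cylN m s ⊆ patF n j := by
        intro x hx
        exact ⟨fun k hk => by rw [hx (n + k) (by omega)]; exact hpat.1 k hk,
          by rw [hx (n + j) (by omega)]; exact hpat.2⟩
      have hint : cylN m s ∩ patF n j = cylN m s := Set.inter_eq_left.2 hsubF
      rw [hint]
      set s' : ℕ → Bool := fun i => if n ≤ i ∧ i ≤ n + j then !(s i) else s i with hs'
      rw [flipIcc_preimage_cylN n j m s, ← hs']
      -- now compute both products
      obtain ⟨r, hr⟩ : ∃ r, m = n + (j + 1) + r := ⟨m - (n + j + 1), by omega⟩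
      have hprod : ∀ u : ℕ → Bool, ∏ i ∈ Finset.range m, wB a (u i) =
          (∏ i ∈ Finset.range n, wB a (u i)) *
          (∏ k ∈ Finset.range (j + 1), wB a (u (n + k))) *
          (∏ k ∈ Finset.range r, wB a (u (n + (j + 1) + k))) := by
        intro u
        rw [hr, Finset.prod_range_add, Finset.prod_range_add]
        try ring
      have houter1 : ∀ i ∈ Finset.range n, wB a (s' i) = wB a (s i) := by
        intro i hi
        simp only [Finset.mem_range] at hi
        simp only [hs']
        rw [if_neg (by omega)]
      have houter2 : ∀ k ∈ Finset.range r, wB a (s' (n + (j + 1) + k)) =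
          wB a (s (n + (j + 1) + k)) := by
        intro k _
        simp only [hs']
        rw [if_neg (by omega)]
      have hpre_s : ∏ k ∈ Finset.range j, wB a (s (n + k)) =
          ENNReal.ofReal (1 - a) ^ j := by
        calc ∏ k ∈ Finset.range j, wB a (s (n + k))
            = ∏ _k ∈ Finset.range j, ENNReal.ofReal (1 - a) := by
              apply Finset.prod_congr rfl
              intro k hk
              simp only [Finset.mem_range] at hk
              rw [hpat.1 k hk]
              simp [wB]
          _ = ENNReal.ofReal (1 - a) ^ j := by
              rw [Finset.prod_const, Finset.card_range]
      have hmid_s : ∏ k ∈ Finset.range (j + 1), wB a (s (n + k)) =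
          ENNReal.ofReal (1 - a) ^ j * ENNReal.ofReal a := by
        rw [Finset.prod_range_succ, hpre_s, hpat.2]
        simp [wB]
      have h1 : s' (n + j) = true := by
        simp only [hs']
        rw [if_pos (by omega : n ≤ n + j ∧ n + j ≤ n + j), hpat.2]
        rfl
      have hpre_s' : ∏ k ∈ Finset.range j, wB a (s' (n + k)) =
          ENNReal.ofReal a ^ j := by
        calc ∏ k ∈ Finset.range j, wB a (s' (n + k))
            = ∏ _k ∈ Finset.range j, ENNReal.ofReal a := by
              apply Finset.prod_congr rfl
              intro k hk
              simp only [Finset.mem_range] at hk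
              have h2 : s' (n + k) = false := by
                simp only [hs']
                rw [if_pos (by omega : n ≤ n + k ∧ n + k ≤ n + j), hpat.1 k hk]
                rfl
              rw [h2]
              simp [wB]
          _ = ENNReal.ofReal a ^ j := by
              rw [Finset.prod_const, Finset.card_range]
      have hmid_s' : ∏ k ∈ Finset.range (j + 1), wB a (s' (n + k)) =
          ENNReal.ofReal a ^ j * ENNReal.ofReal (1 - a) := by
        rw [Finset.prod_range_succ, hpre_s', h1]
        simp [wB]
      have h1a : (0:ℝ) < 1 - a := by linarith
      have hkey : ENNReal.ofReal a ^ j * ENNReal.ofReal (1 - a) =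
          c * (ENNReal.ofReal (1 - a) ^ j * ENNReal.ofReal a) := by
        rw [hc]
        have e1 : ENNReal.ofReal (a / (1 - a)) ^ j * ENNReal.ofReal (1 - a) ^ j =
            ENNReal.ofReal a ^ j := by
          rw [← mul_pow, ← ENNReal.ofReal_mul (by positivity),
            div_mul_cancel₀ _ (by linarith : (1 : ℝ) - a ≠ 0)]
        have e2 : ENNReal.ofReal ((1 - a) / a) * ENNReal.ofReal a =
            ENNReal.ofReal (1 - a) := by
          rw [← ENNReal.ofReal_mul (by positivity),
            div_mul_cancel₀ _ (ne_of_gt ha0)]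
        calc ENNReal.ofReal a ^ j * ENNReal.ofReal (1 - a)
            = (ENNReal.ofReal (a / (1 - a)) ^ j * ENNReal.ofReal (1 - a) ^ j) *
              (ENNReal.ofReal ((1 - a) / a) * ENNReal.ofReal a) := by rw [e1, e2]
          _ = _ := by ring
      rw [bern_cylN hν, bern_cylN hν, hprod s, hprod s',
        Finset.prod_congr rfl houter1, Finset.prod_congr rfl houter2, hmid_s, hmid_s', hkey]
      ring
    · -- incompatible case : both sides are zero
      have hempty : cylN m s ∩ patF n j = ∅ := by
        rw [Set.eq_empty_iff_forall_notMem]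
        rintro x ⟨hx, hpx⟩
        apply hpat
        constructor
        · intro k hk
          rw [← hx (n + k) (by omega)]
          exact hpx.1 k hk
        · rw [← hx (n + j) (by omega)]
          exact hpx.2
      rw [hempty]
      simp
  rw [← hμ₁_apply A hA, hmain, hμ₂, Measure.smul_apply, smul_eq_mul,
    Measure.restrict_apply hA]
end KeyFlip


def patG (n j : ℕ) : Set (ℕ → Bool) :=
  {x | (∀ k < j, x (n + k) = false) ∧ x (n + j) = true}

lemma iterate_eq_flip_on_patG (n j : ℕ) (x : ℕ → Bool) (hx : x ∈ patG n j) :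
    odometerInv^[2 ^ n] x = flipIcc n j x := by
  funext i
  rw [odometerInv_iterate_two_pow n x i]
  by_cases hin : i < n
  · rw [if_pos hin, flipIcc, if_neg (by omega)]
  · rw [if_neg hin]
    have heq : n + (i - n) = i := by omega
    by_cases hij : i ≤ n + j
    · have hcond : ∀ k < i - n, x (n + k) = false := fun k hk => hx.1 k (by omega)
      show (if ∀ k < i - n, x (n + k) = false then !(x (n + (i - n))) else x (n + (i - n)))
        = flipIcc n j x i
      rw [if_pos hcond, heq, flipIcc, if_pos ⟨by omega, hij⟩]
    · have hcond : ¬ ∀ k < i - n, x (n + k) = false := by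
        push_neg
        exact ⟨j, by omega, by rw [hx.2]; simp⟩
      show (if ∀ k < i - n, x (n + k) = false then !(x (n + (i - n))) else x (n + (i - n)))
        = flipIcc n j x i
      rw [if_neg hcond, heq, flipIcc, if_neg (by omega)]

lemma flip_preimage_patF (n j : ℕ) : flipIcc n j ⁻¹' patF n j = patG n j := by
  ext x
  simp only [Set.mem_preimage, patF, patG, Set.mem_setOf_eq]
  constructor
  · rintro ⟨h1, h2⟩
    constructor
    · intro k hk
      have := h1 k hk
      simp only [flipIcc, if_pos (show n ≤ n + k ∧ n + k ≤ n + j by omega)] at this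
      cases hxx : x (n + k)
      · rfl
      · rw [hxx] at this; simp at this
    · have := h2
      simp only [flipIcc, if_pos (show n ≤ n + j ∧ n + j ≤ n + j by omega)] at this
      cases hxx : x (n + j)
      · rw [hxx] at this; simp at this
      · rfl
  · rintro ⟨h1, h2⟩
    constructor
    · intro k hk
      simp only [flipIcc, if_pos (show n ≤ n + k ∧ n + k ≤ n + j by omega)]
      rw [h1 k hk]
      rfl
    · simp only [flipIcc, if_pos (show n ≤ n + j ∧ n + j ≤ n + j by omega)]
      rw [h2]
      rfl

section MainIneq
variable {a : ℝ} {ν : Measure (ℕ → Bool)}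

lemma nu_iterate_le (hν : IsBernoulliProd a ν) (ha0 : 0 < a) (ha : a ≤ 1 / 2) (n : ℕ)
    (A : Set (ℕ → Bool)) (hA : MeasurableSet A) :
    ν (odometerInv^[2 ^ n] ⁻¹' A) ≤ ENNReal.ofReal ((1 - a) / a) * ν A := by
  haveI : IsProbabilityMeasure ν := hν.1
  have ha1 : a < 1 := by linarith
  set S := odometerInv^[2 ^ n] with hS
  set C := ENNReal.ofReal ((1 - a) / a) with hC
  -- cover the preimage
  have hcover : S ⁻¹' A ⊆ (⋃ j, S ⁻¹' A ∩ patG n j) ∪ {x | ∀ k, x (n + k) = false} := by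
    intro x hx
    by_cases hex : ∃ k, x (n + k) = true
    · left
      classical
      let j := Nat.find hex
      refine Set.mem_iUnion.2 ⟨j, hx, ?_, Nat.find_spec hex⟩
      intro k' hk'
      have := Nat.find_min hex hk'
      cases hxx : x (n + k')
      · rfl
      · exact absurd hxx this
    · right
      intro k
      cases hxx : x (n + k)
      · rfl
      · exact absurd ⟨k, hxx⟩ hex
  have hGF : ∀ j, S ⁻¹' A ∩ patG n j = flipIcc n j ⁻¹' (A ∩ patF n j) := by
    intro j
    rw [Set.preimage_inter, flip_preimage_patF]
    ext x
    simp only [Set.mem_inter_iff, Set.mem_preimage]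
    constructor
    · rintro ⟨h1, h2⟩
      refine ⟨?_, h2⟩
      rw [← iterate_eq_flip_on_patG n j x h2]
      exact h1
    · rintro ⟨h1, h2⟩
      refine ⟨?_, h2⟩
      rw [← iterate_eq_flip_on_patG n j x h2] at h1
      exact h1
  have hcj : ∀ j : ℕ, ENNReal.ofReal (a / (1 - a)) ^ j * ENNReal.ofReal ((1 - a) / a) ≤ C := by
    intro j
    rw [hC]
    have h1 : ENNReal.ofReal (a / (1 - a)) ≤ 1 := by
      rw [show (1 : ℝ≥0∞) = ENNReal.ofReal 1 by simp]
      apply ENNReal.ofReal_le_ofReal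
      rw [div_le_one (by linarith)]
      linarith
    calc ENNReal.ofReal (a / (1 - a)) ^ j * ENNReal.ofReal ((1 - a) / a)
        ≤ 1 ^ j * ENNReal.ofReal ((1 - a) / a) :=
          mul_le_mul_left (pow_le_pow_left' h1 j) _
      _ = ENNReal.ofReal ((1 - a) / a) := by rw [one_pow, one_mul]
  have hpatF_disj : Pairwise (Function.onFun Disjoint fun j => A ∩ patF n j) := by
    intro j j' hjj'
    apply Set.disjoint_left.2
    rintro x ⟨-, hx⟩ ⟨-, hx'⟩
    rcases Nat.lt_or_ge j j' with h | h
    · have := hx'.1 j h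
      rw [hx.2] at this
      exact Bool.false_ne_true this
    · have hlt : j' < j := by omega
      have := hx.1 j' hlt
      rw [hx'.2] at this
      exact Bool.false_ne_true this
  calc ν (S ⁻¹' A)
      ≤ ν ((⋃ j, S ⁻¹' A ∩ patG n j) ∪ {x | ∀ k, x (n + k) = false}) := measure_mono hcover
    _ ≤ ν (⋃ j, S ⁻¹' A ∩ patG n j) + ν {x | ∀ k, x (n + k) = false} := measure_union_le _ _
    _ = ν (⋃ j, S ⁻¹' A ∩ patG n j) := by
        rw [bern_tail_false_null hν (le_of_lt ha0) (le_of_lt ha1)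
          (by rw [show (1:ℝ≥0∞) = ENNReal.ofReal 1 by simp]
              exact ENNReal.ofReal_lt_ofReal_iff_of_nonneg (le_of_lt ha0) |>.2 ha1) n,
          add_zero]
    _ ≤ ∑' j, ν (S ⁻¹' A ∩ patG n j) := measure_iUnion_le _
    _ = ∑' j, (ENNReal.ofReal (a / (1 - a)) ^ j * ENNReal.ofReal ((1 - a) / a))
          * ν (A ∩ patF n j) := by
        congr 1
        funext j
        rw [hGF j, key_flip hν ha0 ha1 n j A hA]
    _ ≤ ∑' j, C * ν (A ∩ patF n j) := by
        apply ENNReal.tsum_le_tsum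
        intro j
        exact mul_le_mul_left (hcj j) _
    _ = C * ∑' j, ν (A ∩ patF n j) := ENNReal.tsum_mul_left
    _ = C * ν (⋃ j, A ∩ patF n j) := by
        rw [measure_iUnion hpatF_disj (fun j => hA.inter (measurableSet_patF n j))]
    _ ≤ C * ν A := by
        apply mul_le_mul_right
        apply measure_mono
        exact Set.iUnion_subset fun j => Set.inter_subset_left

end MainIneq

/-- the transformation θ_{2^n} on the product space (for points in the strip). -/
def Tmap (n : ℕ) : (ℕ → Bool) × ℝ → (ℕ → Bool) × ℝ :=
  fun z => (odometerInv^[2 ^ n] z.1, z.2)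

lemma measurable_odometerInv : Measurable odometerInv := by
  apply measurable_pi_iff.2
  intro i
  have : (fun x : ℕ → Bool => odometerInv x i) =
      fun x => if ∀ k < i, x k = false then !(x i) else x i := rfl
  rw [this]
  apply Measurable.ite
  · have : {x : ℕ → Bool | ∀ k < i, x k = false} =
        ⋂ k ∈ Finset.range i, (fun x : ℕ → Bool => x k) ⁻¹' {false} := by
      ext x; simp [Set.mem_iInter]
    rw [this]
    exact MeasurableSet.biInter (Set.to_countable _)
      (fun k _ => (measurable_pi_apply k) (measurableSet_singleton false))
  · exact (measurable_of_countable Bool.not).comp (measurable_pi_apply i)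
  · exact measurable_pi_apply i

lemma measurable_Tmap (n : ℕ) : Measurable (Tmap n) :=
  ((measurable_odometerInv.iterate (2 ^ n)).comp measurable_fst).prodMk measurable_snd

section Lift
variable {a : ℝ} {ν : Measure (ℕ → Bool)}

lemma prod_Tmap_le (hν : IsBernoulliProd a ν) (ha0 : 0 < a) (ha : a ≤ 1 / 2) (n : ℕ)
    (B : Set ((ℕ → Bool) × ℝ)) (hB : MeasurableSet B) :
    (ν.prod (volume.restrict (Set.Ico (0:ℝ) 1))) (Tmap n ⁻¹' B) ≤
      ENNReal.ofReal ((1 - a) / a) *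
        (ν.prod (volume.restrict (Set.Ico (0:ℝ) 1))) B := by
  haveI : IsProbabilityMeasure ν := hν.1
  rw [Measure.prod_apply_symm (measurable_Tmap n hB), Measure.prod_apply_symm hB,
    ← lintegral_const_mul' _ _ ENNReal.ofReal_ne_top]
  apply lintegral_mono
  intro y
  show ν ((fun x => (x, y)) ⁻¹' (Tmap n ⁻¹' B)) ≤
    ENNReal.ofReal ((1 - a) / a) * ν ((fun x => (x, y)) ⁻¹' B)
  have hsec : (fun x => (x, y)) ⁻¹' (Tmap n ⁻¹' B) =
      odometerInv^[2 ^ n] ⁻¹' ((fun x => (x, y)) ⁻¹' B) := rfl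
  rw [hsec]
  exact nu_iterate_le hν ha0 ha n _ ((measurable_prodMk_right) hB)

lemma lintegral_Tmap_le (hν : IsBernoulliProd a ν) (ha0 : 0 < a) (ha : a ≤ 1 / 2) (n : ℕ)
    (h : (ℕ → Bool) × ℝ → ℝ≥0∞) (hmeas : Measurable h) :
    ∫⁻ z, h (Tmap n z) ∂(ν.prod (volume.restrict (Set.Ico (0:ℝ) 1))) ≤
      ENNReal.ofReal ((1 - a) / a) *
        ∫⁻ z, h z ∂(ν.prod (volume.restrict (Set.Ico (0:ℝ) 1))) := by
  set μ := ν.prod (volume.restrict (Set.Ico (0:ℝ) 1)) with hμ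
  have hle : μ.map (Tmap n) ≤ ENNReal.ofReal ((1 - a) / a) • μ := by
    rw [Measure.le_iff]
    intro s hs
    rw [Measure.map_apply (measurable_Tmap n) hs, Measure.smul_apply, smul_eq_mul]
    exact prod_Tmap_le hν ha0 ha n s hs
  calc ∫⁻ z, h (Tmap n z) ∂μ = ∫⁻ z, h z ∂(μ.map (Tmap n)) :=
        (lintegral_map hmeas (measurable_Tmap n)).symm
    _ ≤ ∫⁻ z, h z ∂(ENNReal.ofReal ((1 - a) / a) • μ) := lintegral_mono' hle le_rfl
    _ = ENNReal.ofReal ((1 - a) / a) * ∫⁻ z, h z ∂μ := lintegral_smul_measure _ _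

lemma eLpNorm_Tmap_le (hν : IsBernoulliProd a ν) (ha0 : 0 < a) (ha : a ≤ 1 / 2) (n : ℕ)
    (h : (ℕ → Bool) × ℝ → ℝ) (hmeas : Measurable h) :
    eLpNorm (fun z => h (Tmap n z)) 2 (ν.prod (volume.restrict (Set.Ico (0:ℝ) 1))) ≤
      ENNReal.ofReal ((1 - a) / a) ^ (1/2 : ℝ) *
        eLpNorm h 2 (ν.prod (volume.restrict (Set.Ico (0:ℝ) 1))) := by
  set μ := ν.prod (volume.restrict (Set.Ico (0:ℝ) 1)) with hμ
  rw [eLpNorm_eq_lintegral_rpow_enorm_toReal (by norm_num) (by norm_num),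
    eLpNorm_eq_lintegral_rpow_enorm_toReal (by norm_num) (by norm_num)]
  have htr : (2 : ℝ≥0∞).toReal = (2 : ℝ) := by norm_num
  rw [htr]
  have hint : ∫⁻ z, (↑‖h (Tmap n z)‖₊ : ℝ≥0∞) ^ (2:ℝ) ∂μ ≤
      ENNReal.ofReal ((1 - a) / a) * ∫⁻ z, (↑‖h z‖₊ : ℝ≥0∞) ^ (2:ℝ) ∂μ :=
    lintegral_Tmap_le hν ha0 ha n (fun z => (↑‖h z‖₊ : ℝ≥0∞) ^ (2:ℝ))
      ((ENNReal.continuous_rpow_const.measurable).comp hmeas.nnnorm.coe_nnreal_ennreal)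
  calc (∫⁻ z, (↑‖h (Tmap n z)‖₊ : ℝ≥0∞) ^ (2:ℝ) ∂μ) ^ (1/(2:ℝ))
      ≤ (ENNReal.ofReal ((1 - a) / a) * ∫⁻ z, (↑‖h z‖₊ : ℝ≥0∞) ^ (2:ℝ) ∂μ) ^ (1/(2:ℝ)) :=
        ENNReal.rpow_le_rpow hint (by norm_num)
    _ = ENNReal.ofReal ((1 - a) / a) ^ (1/2:ℝ) *
        (∫⁻ z, (↑‖h z‖₊ : ℝ≥0∞) ^ (2:ℝ) ∂μ) ^ (1/(2:ℝ)) :=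
        ENNReal.mul_rpow_of_nonneg _ _ (by norm_num)

end Lift

lemma flowMap_eq_Tmap (n : ℕ) (z : (ℕ → Bool) × ℝ) (hz : z.2 ∈ Set.Ico (0:ℝ) 1) :
    flowMap (-(2 ^ n : ℝ)) z = Tmap n z := by
  have h1 : (-(2 ^ n : ℝ) + z.2) = z.2 + (Int.cast (-(2 ^ n : ℤ)) : ℝ) := by push_cast; ring
  have hfl : ⌊-(2 ^ n : ℝ) + z.2⌋ = -(2 ^ n : ℤ) := by
    rw [h1, Int.floor_add_intCast, Int.floor_eq_zero_iff.2 hz, zero_add]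
  have hfr : Int.fract (-(2 ^ n : ℝ) + z.2) = z.2 := by
    rw [h1, Int.fract_add_intCast, Int.fract_eq_self.2 ⟨hz.1, hz.2⟩]
  show (odometerZ ⌊-(2 ^ n : ℝ) + z.2⌋ z.1, Int.fract (-(2 ^ n : ℝ) + z.2)) = _
  rw [hfl, hfr]
  have hneg : ¬ (0 : ℤ) ≤ -(2 ^ n) := by
    simp only [neg_nonneg]
    intro hcon
    have : (0:ℤ) < 2 ^ n := pow_pos (by norm_num) n
    omega
  have htn : ((-(-(2 ^ n : ℤ))).toNat) = 2 ^ n := by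
    rw [neg_neg, show ((2:ℤ) ^ n) = ((2 ^ n : ℕ) : ℤ) by push_cast; ring, Int.toNat_natCast]
  show (odometerZ (-(2 ^ n : ℤ)) z.1, z.2) = (odometerInv^[2 ^ n] z.1, z.2)
  unfold odometerZ
  rw [if_neg hneg, htn]

lemma ae_snd_Ico (ν : Measure (ℕ → Bool)) [IsProbabilityMeasure ν] :
    ∀ᵐ z ∂(ν.prod (volume.restrict (Set.Ico (0:ℝ) 1))), z.2 ∈ Set.Ico (0:ℝ) 1 := by
  rw [ae_iff]
  have h : {z : (ℕ → Bool) × ℝ | ¬ z.2 ∈ Set.Ico (0:ℝ) 1} =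
      Set.univ ×ˢ (Set.Ico (0:ℝ) 1)ᶜ := by
    ext z
    simp [Set.mem_prod]
  rw [h, Measure.prod_prod, Measure.restrict_apply measurableSet_Ico.compl]
  simp

lemma tendsto_Tmap (z : (ℕ → Bool) × ℝ) :
    Tendsto (fun n : ℕ => Tmap n z) atTop (𝓝 z) := by
  have h1 : Tendsto (fun n : ℕ => odometerInv^[2 ^ n] z.1) atTop (𝓝 z.1) := by
    apply tendsto_pi_nhds.2
    intro i
    apply Tendsto.congr' _ (tendsto_const_nhds (x := z.1 i))
    filter_upwards [eventually_ge_atTop (i + 1)] with n hn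
    rw [odometerInv_iterate_two_pow n z.1 i, if_pos (by omega)]
  have h2 := h1.prodMk_nhds (tendsto_const_nhds (x := z.2))
  simpa [Tmap] using h2

lemma tendsto_mid (g : BoundedContinuousFunction ((ℕ → Bool) × ℝ) ℝ) (μ : Measure ((ℕ → Bool) × ℝ))
    [IsFiniteMeasure μ] :
    Tendsto (fun n => eLpNorm (fun z => g (Tmap n z) - g z) 2 μ) atTop (𝓝 0) := by
  have htr : (2 : ℝ≥0∞).toReal = (2 : ℝ) := by norm_num
  have hform : ∀ n : ℕ, eLpNorm (fun z => g (Tmap n z) - g z) 2 μ =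
      (∫⁻ z, (↑‖g (Tmap n z) - g z‖₊ : ℝ≥0∞) ^ (2:ℝ) ∂μ) ^ (1/(2:ℝ)) := by
    intro n
    rw [eLpNorm_eq_lintegral_rpow_enorm_toReal (by norm_num) (by norm_num), htr]
    rfl
  simp only [hform]
  have hDCT : Tendsto (fun n => ∫⁻ z, (↑‖g (Tmap n z) - g z‖₊ : ℝ≥0∞) ^ (2:ℝ) ∂μ)
      atTop (𝓝 0) := by
    have h0 : (0:ℝ≥0∞) = ∫⁻ _z, (0:ℝ≥0∞) ∂μ := by simp
    rw [h0]
    apply tendsto_lintegral_of_dominated_convergence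
      (bound := fun _ => (ENNReal.ofReal (2 * ‖g‖)) ^ (2:ℝ))
    · intro n
      exact (ENNReal.continuous_rpow_const.measurable).comp
        (((g.continuous.measurable.comp (measurable_Tmap n)).sub
          g.continuous.measurable).nnnorm.coe_nnreal_ennreal)
    · intro n
      apply ae_of_all
      intro z
      apply ENNReal.rpow_le_rpow _ (by norm_num : (0:ℝ) ≤ 2)
      rw [show (‖g (Tmap n z) - g z‖₊ : ℝ≥0∞) = ENNReal.ofReal ‖g (Tmap n z) - g z‖ from (ofReal_norm _).symm]
      apply ENNReal.ofReal_le_ofReal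
      calc ‖g (Tmap n z) - g z‖ ≤ ‖g (Tmap n z)‖ + ‖g z‖ := norm_sub_le _ _
        _ ≤ ‖g‖ + ‖g‖ := add_le_add (g.norm_coe_le_norm _) (g.norm_coe_le_norm _)
        _ = 2 * ‖g‖ := by ring
    · rw [lintegral_const]
      exact (ENNReal.mul_lt_top
        (ENNReal.rpow_lt_top_of_nonneg (by norm_num) ENNReal.ofReal_ne_top)
        (measure_lt_top μ _)).ne
    · apply ae_of_all
      intro z
      have h1 : Tendsto (fun n : ℕ => g (Tmap n z) - g z) atTop (𝓝 0) := by
        have := ((g.continuous.tendsto z).comp (tendsto_Tmap z)).sub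
          (tendsto_const_nhds (x := g z))
        simpa using this
      have h2 : Tendsto (fun n : ℕ => (↑‖g (Tmap n z) - g z‖₊ : ℝ≥0∞)) atTop (𝓝 0) := by
        rw [← ENNReal.coe_zero]
        exact ENNReal.tendsto_coe.2 (by simpa using h1.nnnorm)
      have h3 := ((ENNReal.continuous_rpow_const (y := (2:ℝ))).tendsto 0).comp h2
      simp only [Function.comp_def] at h3
      rwa [ENNReal.zero_rpow_of_pos (by norm_num)] at h3
  have h4 := ((ENNReal.continuous_rpow_const (y := (1/2:ℝ))).tendsto 0).comp hDCT
  simp only [Function.comp_def] at h4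
  rwa [ENNReal.zero_rpow_of_pos (by norm_num)] at h4

/-- For the flow `θ` built under the constant ceiling `1` over the dyadic odometer (with the
measure `ν_a × dx` on `{0,1}^ℕ × [0,1)`), `θ_{2^n}(f) = f ∘ g̃_{-2^n}` converges to `f`
in `L²(ν_a × dx)` for every `f ∈ L^∞`. -/
theorem tendsto_L2_flow_two_pow (a : ℝ) (ha0 : 0 < a) (ha : a ≤ 1 / 2)
    (ν : Measure (ℕ → Bool)) (hν : IsBernoulliProd a ν)
    (f : (ℕ → Bool) × ℝ → ℝ) (hf : Measurable f)
    (hfbd : MemLp f ⊤ (ν.prod (volume.restrict (Set.Ico (0 : ℝ) 1)))) :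
    Tendsto
      (fun n : ℕ =>
        eLpNorm (fun z => f (flowMap (-(2 ^ n : ℝ)) z) - f z) 2
          (ν.prod (volume.restrict (Set.Ico (0 : ℝ) 1))))
      atTop (𝓝 0) := by
  haveI : IsProbabilityMeasure ν := hν.1
  set μ := ν.prod (volume.restrict (Set.Ico (0 : ℝ) 1)) with hμ
  have hae : ∀ n : ℕ, eLpNorm (fun z => f (flowMap (-(2 ^ n : ℝ)) z) - f z) 2 μ
      = eLpNorm (fun z => f (Tmap n z) - f z) 2 μ := by
    intro n
    apply eLpNorm_congr_ae
    filter_upwards [ae_snd_Ico ν] with z hz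
    rw [flowMap_eq_Tmap n z hz]
  simp only [hae]
  rw [ENNReal.tendsto_atTop_zero]
  intro ε hε
  set C2 : ℝ≥0∞ := ENNReal.ofReal ((1 - a) / a) ^ (1/2 : ℝ) with hC2
  have hC2top : C2 ≠ ⊤ :=
    (ENNReal.rpow_lt_top_of_nonneg (by norm_num) ENNReal.ofReal_ne_top).ne
  set K : ℝ≥0∞ := C2 + 1 with hK
  have hKtop : K ≠ ⊤ := by
    rw [hK]
    exact (ENNReal.add_lt_top.2 ⟨hC2top.lt_top, ENNReal.one_lt_top⟩).ne
  have hK0 : K ≠ 0 := by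
    rw [hK]
    simp
  set δ : ℝ≥0∞ := (ε / 2) / K with hδ
  have hε2 : (0:ℝ≥0∞) < ε / 2 := ENNReal.div_pos hε.ne' (by norm_num)
  have hδ0 : δ ≠ 0 := (ENNReal.div_pos hε2.ne' hKtop).ne'
  have hf2 : MemLp f 2 μ := hfbd.mono_exponent le_top
  obtain ⟨g, hg, -⟩ := hf2.exists_boundedContinuous_eLpNorm_sub_le
    (by norm_num : (2:ℝ≥0∞) ≠ ∞) hδ0
  obtain ⟨N, hN⟩ := (ENNReal.tendsto_atTop_zero.1 (tendsto_mid g μ)) (ε / 2) hε2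
  refine ⟨N, fun n hn => ?_⟩
  have heq : (fun z => f (Tmap n z) - f z) =
      ((fun z => f (Tmap n z) - g (Tmap n z)) +
        ((fun z => g (Tmap n z) - g z) + (fun z => g z - f z))) := by
    funext z
    simp only [Pi.add_apply]
    ring
  rw [heq]
  have hmeas1 : AEStronglyMeasurable (fun z => f (Tmap n z) - g (Tmap n z)) μ :=
    ((hf.comp (measurable_Tmap n)).sub
      (g.continuous.measurable.comp (measurable_Tmap n))).aestronglyMeasurable
  have hmeas2 : AEStronglyMeasurable (fun z => g (Tmap n z) - g z) μ :=
    ((g.continuous.measurable.comp (measurable_Tmap n)).sub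
      g.continuous.measurable).aestronglyMeasurable
  have hmeas3 : AEStronglyMeasurable (fun z => g z - f z) μ :=
    (g.continuous.measurable.sub hf).aestronglyMeasurable
  have hX : eLpNorm (fun z => f (Tmap n z) - g (Tmap n z)) 2 μ ≤ C2 * δ := by
    have h1 : eLpNorm (fun z => f (Tmap n z) - g (Tmap n z)) 2 μ ≤
        C2 * eLpNorm (fun w => f w - g w) 2 μ :=
      eLpNorm_Tmap_le hν ha0 ha n (fun w => f w - g w) (hf.sub g.continuous.measurable)
    exact h1.trans (mul_le_mul_right hg C2)
  have hY : eLpNorm (fun z => g (Tmap n z) - g z) 2 μ ≤ ε / 2 := hN n hn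
  have hZ : eLpNorm (fun z => g z - f z) 2 μ ≤ δ := by
    have := eLpNorm_sub_comm (⇑g) f 2 μ
    calc eLpNorm (fun z => g z - f z) 2 μ = eLpNorm (⇑g - f) 2 μ := rfl
      _ = eLpNorm (f - ⇑g) 2 μ := eLpNorm_sub_comm _ _ _ _
      _ ≤ δ := hg
  calc eLpNorm ((fun z => f (Tmap n z) - g (Tmap n z)) +
        ((fun z => g (Tmap n z) - g z) + (fun z => g z - f z))) 2 μ
      ≤ eLpNorm (fun z => f (Tmap n z) - g (Tmap n z)) 2 μ +
        eLpNorm ((fun z => g (Tmap n z) - g z) + (fun z => g z - f z)) 2 μ :=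
        eLpNorm_add_le hmeas1 (hmeas2.add hmeas3) one_le_two
    _ ≤ eLpNorm (fun z => f (Tmap n z) - g (Tmap n z)) 2 μ +
        (eLpNorm (fun z => g (Tmap n z) - g z) 2 μ + eLpNorm (fun z => g z - f z) 2 μ) :=
        add_le_add_right (eLpNorm_add_le hmeas2 hmeas3 one_le_two) _
    _ ≤ C2 * δ + (ε / 2 + δ) := add_le_add hX (add_le_add hY hZ)
    _ = K * δ + ε / 2 := by rw [hK]; ring
    _ = ε / 2 + ε / 2 := by
        rw [hδ, ENNReal.mul_div_cancel hK0 hKtop, add_comm]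
    _ = ε := ENNReal.add_halves ε
end

section
/- Let 0 < a ≤ 1/2 and let σ be the automorphism of L^∞({0,1}^ℕ, ν_a) induced by the dyadic odometer, and let θ = (θ_s)_{s∈ℝ} be the associated flow under the constant ceiling 1 on L^∞({0,1}^ℕ × [0,1), ν_a × dx). Fix τ = 2πk/2^n with k ∈ ℤ, n ∈ ℕ. Then there exists a unitary u ∈ L^∞({0,1}^ℕ × [0,1)) with θ_s(u) = e^{iτs} u for all s ∈ ℝ; explicitly, u(x,y) = u₀(x) e^{-iτy} where u₀ = Σ_{j=0}^{2^n-1} e^{-ijτ} 1_{G_j}, and G_j is the cylinder set of sequences whose first n coordinates are the binary digits of j. -/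
open MeasureTheory Filter Topology ENNReal

/-- value of first `n` bits -/
def bval (n : ℕ) (x : ℕ → Bool) : ℕ := ∑ i ∈ Finset.range n, (x i).toNat * 2 ^ i

lemma bval_succ (n : ℕ) (x : ℕ → Bool) :
    bval (n + 1) x = bval n x + (x n).toNat * 2 ^ n := by
  rw [bval, Finset.sum_range_succ, ← bval]

lemma bval_lt (n : ℕ) (x : ℕ → Bool) : bval n x < 2 ^ n := by
  induction n with
  | zero => simp [bval]
  | succ n ih =>
    rw [bval, Finset.sum_range_succ, ← bval, pow_succ]
    have : (x n).toNat * 2 ^ n ≤ 2 ^ n := by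
      cases x n <;> simp
    omega

lemma bval_all_true (n : ℕ) (x : ℕ → Bool) (h : ∀ k < n, x k = true) :
    bval n x = 2 ^ n - 1 := by
  induction n with
  | zero => simp [bval]
  | succ n ih =>
    rw [bval, Finset.sum_range_succ, ← bval, ih (fun k hk => h k (by omega)),
      h n (by omega)]
    have : 1 ≤ 2 ^ n := Nat.one_le_two_pow
    simp [pow_succ]; omega

lemma bval_pos (n : ℕ) (x : ℕ → Bool) (h : ¬ ∀ k < n, x k = false) :
    1 ≤ bval n x := by
  push_neg at h
  obtain ⟨k, hk, hxk⟩ := h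
  have hx : x k = true := by cases hxk' : x k <;> simp_all
  calc 1 ≤ (x k).toNat * 2 ^ k := by rw [hx]; simpa using Nat.one_le_two_pow
  _ ≤ bval n x := Finset.single_le_sum (f := fun i => (x i).toNat * 2 ^ i)
      (fun i _ => Nat.zero_le _) (Finset.mem_range.2 hk)

lemma bval_odometer (n : ℕ) (x : ℕ → Bool) :
    bval n (odometer x) = if ∀ k < n, x k = true then 0 else bval n x + 1 := by
  induction n with
  | zero => simp [bval]
  | succ n ih =>
    rw [bval_succ, ih]
    have hodn : odometer x n = if ∀ k < n, x k = true then !(x n) else x n := rfl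
    by_cases h : ∀ k < n, x k = true
    · rw [if_pos h] at ih ⊢
      rw [hodn, if_pos h]
      have hv : bval n x = 2 ^ n - 1 := bval_all_true n x h
      cases hxn : x n with
      | true =>
        have hall : ∀ k < n + 1, x k = true := by
          intro k hk; rcases Nat.lt_succ_iff_lt_or_eq.1 hk with hk | hk
          · exact h k hk
          · subst hk; exact hxn
        rw [if_pos hall]; simp
      | false =>
        have hnall : ¬ ∀ k < n + 1, x k = true := by
          intro hall; have := hall n (by omega); simp_all
        rw [if_neg hnall, bval_succ, hv]
        have : 1 ≤ 2 ^ n := Nat.one_le_two_pow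
        simp [hxn]
        omega
    · rw [if_neg h] at ih ⊢
      rw [hodn, if_neg h]
      have hnall : ¬ ∀ k < n + 1, x k = true := by
        intro hall; exact h fun k hk => hall k (by omega)
      rw [if_neg hnall, bval_succ]
      ring

lemma bval_odometerInv (n : ℕ) (x : ℕ → Bool) :
    bval n (odometerInv x) = if ∀ k < n, x k = false then 2 ^ n - 1 else bval n x - 1 := by
  induction n with
  | zero => simp [bval]
  | succ n ih =>
    rw [bval_succ, ih]
    have hodn : odometerInv x n = if ∀ k < n, x k = false then !(x n) else x n := rfl
    by_cases h : ∀ k < n, x k = false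
    · rw [if_pos h] at ih ⊢
      rw [hodn, if_pos h]
      have hv : bval n x = 0 := by
        rw [bval]; apply Finset.sum_eq_zero; intro i hi
        rw [h i (Finset.mem_range.1 hi)]; simp
      have h1 : 1 ≤ 2 ^ n := Nat.one_le_two_pow
      cases hxn : x n with
      | false =>
        have hall : ∀ k < n + 1, x k = false := by
          intro k hk; rcases Nat.lt_succ_iff_lt_or_eq.1 hk with hk | hk
          · exact h k hk
          · subst hk; exact hxn
        rw [if_pos hall]; simp [pow_succ]; omega
      | true =>
        have hnall : ¬ ∀ k < n + 1, x k = false := by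
          intro hall; have := hall n (by omega); simp_all
        rw [if_neg hnall, bval_succ, hv, hxn]
        simp
    · rw [if_neg h] at ih ⊢
      rw [hodn, if_neg h]
      have hnall : ¬ ∀ k < n + 1, x k = false := by
        intro hall; exact h fun k hk => hall k (by omega)
      rw [if_neg hnall, bval_succ]
      have := bval_pos n x h
      omega

lemma testBit_bval (n : ℕ) (x : ℕ → Bool) (i : ℕ) (hi : i < n) :
    (bval n x).testBit i = x i := by
  induction n with
  | zero => omega
  | succ n ih =>
    rw [bval_succ, mul_comm, add_comm,
      Nat.testBit_two_pow_mul_add _ (bval_lt n x)]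
    rcases Nat.lt_succ_iff_lt_or_eq.1 hi with hi' | hi'
    · rw [if_pos hi', ih hi']
    · subst hi'; rw [if_neg (lt_irrefl _)]
      cases x i <;> simp

lemma bvalZ_odometer (n : ℕ) (x : ℕ → Bool) :
    ((bval n (odometer x) : ZMod (2 ^ n)) = (bval n x : ZMod (2 ^ n)) + 1) := by
  rw [bval_odometer]
  by_cases h : ∀ k < n, x k = true
  · rw [if_pos h, bval_all_true n x h]
    have h1 : 1 ≤ 2 ^ n := Nat.one_le_two_pow
    have h0 : ((2 ^ n : ℕ) : ZMod (2 ^ n)) = 0 := ZMod.natCast_self _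
    push_cast [Nat.cast_sub h1] at h0 ⊢
    linear_combination -h0
  · rw [if_neg h]; push_cast; ring

lemma bvalZ_odometerInv (n : ℕ) (x : ℕ → Bool) :
    ((bval n (odometerInv x) : ZMod (2 ^ n)) = (bval n x : ZMod (2 ^ n)) - 1) := by
  rw [bval_odometerInv]
  by_cases h : ∀ k < n, x k = false
  · rw [if_pos h]
    have h1 : 1 ≤ 2 ^ n := Nat.one_le_two_pow
    have hv : bval n x = 0 := by
      rw [bval]; apply Finset.sum_eq_zero; intro i hi
      rw [h i (Finset.mem_range.1 hi)]; simp
    have h0 : ((2 ^ n : ℕ) : ZMod (2 ^ n)) = 0 := ZMod.natCast_self _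
    push_cast [Nat.cast_sub h1, hv] at h0 ⊢
    linear_combination h0
  · rw [if_neg h, Nat.cast_sub (bval_pos n x h)]; push_cast; ring

lemma bvalZ_iter (n m : ℕ) (x : ℕ → Bool) :
    ((bval n (odometer^[m] x) : ZMod (2 ^ n)) = (bval n x : ZMod (2 ^ n)) + m) := by
  induction m with
  | zero => simp
  | succ m ih =>
    rw [Function.iterate_succ_apply', bvalZ_odometer, ih]
    push_cast; ring

lemma bvalZ_iterInv (n m : ℕ) (x : ℕ → Bool) :
    ((bval n (odometerInv^[m] x) : ZMod (2 ^ n)) = (bval n x : ZMod (2 ^ n)) - m) := by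
  induction m with
  | zero => simp
  | succ m ih =>
    rw [Function.iterate_succ_apply', bvalZ_odometerInv, ih]
    push_cast; ring

lemma bvalZ_odometerZ (n : ℕ) (m : ℤ) (x : ℕ → Bool) :
    ∃ t : ℤ, (bval n (odometerZ m x) : ℤ) = bval n x + m + 2 ^ n * t := by
  have key : ((bval n (odometerZ m x) : ℤ) : ZMod (2 ^ n)) =
      (((bval n x : ℤ) + m : ℤ) : ZMod (2 ^ n)) := by
    rw [odometerZ]
    by_cases h : 0 ≤ m
    · rw [if_pos h]
      have h1 := bvalZ_iter n m.toNat x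
      have h2 : ((m.toNat : ℤ) : ZMod (2 ^ n)) = ((m : ℤ) : ZMod (2 ^ n)) := by
        rw [Int.toNat_of_nonneg h]
      push_cast at h1 h2 ⊢
      rw [h1, h2]
    · rw [if_neg h]
      have h1 := bvalZ_iterInv n (-m).toNat x
      have h2 : (((-m).toNat : ℤ) : ZMod (2 ^ n)) = ((-m : ℤ) : ZMod (2 ^ n)) := by
        rw [Int.toNat_of_nonneg (by omega)]
      push_cast at h1 h2 ⊢
      rw [h1, h2]; ring
  rw [ZMod.intCast_eq_intCast_iff] at key
  obtain ⟨t, ht⟩ := Int.ModEq.dvd key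
  refine ⟨-t, ?_⟩
  push_cast at ht ⊢
  linear_combination -ht

lemma odometer_sum_collapse (n : ℕ) (x : ℕ → Bool) (τ : ℝ) :
    ∑ j ∈ Finset.range (2 ^ n),
        Complex.exp (-(Complex.I) * j * τ) *
          (if ∀ i < n, x i = (j.testBit i) then 1 else 0) =
      Complex.exp (-(Complex.I) * (bval n x) * τ) := by
  rw [Finset.sum_eq_single (bval n x)]
  · rw [if_pos fun i hi => (testBit_bval n x i hi).symm, mul_one]
  · intro j hj hne
    rw [if_neg, mul_zero]
    intro hP
    apply hne
    apply Nat.eq_of_testBit_eq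
    intro i
    by_cases hi : i < n
    · rw [← hP i hi, testBit_bval n x i hi]
    · rw [Nat.testBit_lt_two_pow, Nat.testBit_lt_two_pow]
      · exact lt_of_lt_of_le (bval_lt n x) (Nat.pow_le_pow_right (by norm_num) (by omega))
      · exact lt_of_lt_of_le (Finset.mem_range.1 hj) (Nat.pow_le_pow_right (by norm_num) (by omega))
  · intro h; exact absurd (Finset.mem_range.2 (bval_lt n x)) h

/-- For `τ = 2πk/2^n`, the explicit function `u(x,y) = u₀(x)·e^{-iτy}` — with
`u₀ = Σ_{j<2^n} e^{-ijτ} 1_{G_j}` and `G_j` the cylinder set of sequences whose first `n`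
coordinates are the binary digits of `j` — is a unitary (modulus-one) element of
`L^∞({0,1}^ℕ × [0,1))` satisfying `θ_s(u) = e^{iτs}·u` for all `s ∈ ℝ`, where
`θ_s(u) = u ∘ g̃_{-s}` for the flow `g̃` built under the ceiling `1` over the odometer. -/
theorem exists_eigenunitary_for_dyadic_tau (k : ℤ) (n : ℕ) (τ : ℝ)
    (hτ : τ = 2 * Real.pi * k / 2 ^ n) :
    let u : (ℕ → Bool) × ℝ → ℂ := fun z =>
      (∑ j ∈ Finset.range (2 ^ n),
          Complex.exp (-(Complex.I) * j * τ) *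
            (if ∀ i < n, z.1 i = (j.testBit i) then 1 else 0)) *
        Complex.exp (-(Complex.I) * τ * z.2)
    (∀ x : ℕ → Bool, ∀ y : ℝ, ‖u (x, y)‖ = 1) ∧
      ∀ s : ℝ, ∀ x : ℕ → Bool, ∀ y : ℝ, y ∈ Set.Ico (0 : ℝ) 1 →
        u (flowMap (-s) (x, y)) = Complex.exp (Complex.I * τ * s) * u (x, y) := by
  intro u
  have hu : ∀ x : ℕ → Bool, ∀ y : ℝ, u (x, y) =
      Complex.exp (-(Complex.I) * (bval n x) * τ) * Complex.exp (-(Complex.I) * τ * y) := by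
    intro x y
    show (∑ j ∈ Finset.range (2 ^ n),
          Complex.exp (-(Complex.I) * j * τ) *
            (if ∀ i < n, x i = (j.testBit i) then 1 else 0)) *
        Complex.exp (-(Complex.I) * τ * y) = _
    rw [odometer_sum_collapse]
  constructor
  · intro x y
    have h1 : -(Complex.I) * (bval n x : ℂ) * (τ : ℂ) =
        ((-((bval n x : ℝ) * τ) : ℝ) : ℂ) * Complex.I := by push_cast; ring
    have h2 : -(Complex.I) * (τ : ℂ) * (y : ℂ) = ((-(τ * y) : ℝ) : ℂ) * Complex.I := by
      push_cast; ring
    rw [hu, h1, h2, norm_mul, Complex.norm_exp_ofReal_mul_I, Complex.norm_exp_ofReal_mul_I,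
      mul_one]
  · intro s x y _
    set m := ⌊-s + y⌋ with hm
    have hflow : flowMap (-s) (x, y) = (odometerZ m x, Int.fract (-s + y)) := rfl
    obtain ⟨t, ht⟩ := bvalZ_odometerZ n m x
    rw [hflow, hu, hu]
    have htC : ((bval n (odometerZ m x) : ℂ)) = (bval n x : ℂ) + m + 2 ^ n * t := by
      exact_mod_cast ht
    have hfr : Int.fract (-s + y) = -s + y - (m : ℝ) := by
      rw [hm]; exact (Int.self_sub_floor _).symm
    have hfrC : ((Int.fract (-s + y) : ℝ) : ℂ) = -(s : ℂ) + y - m := by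
      rw [hfr]; push_cast; ring
    have hτC : (τ : ℂ) * 2 ^ n = 2 * Real.pi * k := by
      have h : τ * 2 ^ n = 2 * Real.pi * k := by
        rw [hτ]; field_simp
      exact_mod_cast h
    rw [← Complex.exp_add, ← Complex.exp_add, ← Complex.exp_add]
    rw [show -(Complex.I) * ((bval n (odometerZ m x) : ℕ) : ℂ) * (τ : ℂ) +
          -(Complex.I) * (τ : ℂ) * ((Int.fract (-s + y) : ℝ) : ℂ) =
        (Complex.I * (τ : ℂ) * (s : ℂ) +
            (-(Complex.I) * ((bval n x : ℕ) : ℂ) * (τ : ℂ) +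
              -(Complex.I) * (τ : ℂ) * (y : ℂ))) +
          ((-(k * t) : ℤ) : ℂ) * (2 * (Real.pi : ℂ) * Complex.I) from by
      push_cast at htC hfrC hτC ⊢
      linear_combination (-Complex.I * (τ : ℂ)) * htC + (-Complex.I * (τ : ℂ)) * hfrC +
        (-Complex.I * (t : ℂ)) * hτC]
    rw [Complex.exp_add, Complex.exp_int_mul_two_pi_mul_I, mul_one]
end
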